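/- arXiv:1012.5122 — 7 statements merged into one kernel-verified Lean document; each statement's English description precedes it below -/
import Mathlib

section
/- Let G be a group and H₁, H₂ subgroups of G. If for every normal subgroup N of finite index in G the image of H₂ in G/N is conjugate to a subgroup of the image of H₁ in G/N, then for every finite-index subgroup D of G containing H₁, there exists g ∈ G with g⁻¹H₂g ≤ D. -/
/-- `A` is conjugate into `B`: some conjugate `g⁻¹Ag` is contained in `B`. -/
def ConjInto {G : Type*} [Group G] (A B : Subgroup G) : Prop :=
  ∃ g : G, ∀ a ∈ A, g⁻¹ * a * g ∈ B

theorem stmt0 {G : Type*} [Group G] (H₁ H₂ : Subgroup G)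
    (h : ∀ (N : Subgroup G) [N.Normal], N.index ≠ 0 →
      ConjInto (H₂.map (QuotientGroup.mk' N)) (H₁.map (QuotientGroup.mk' N)))
    (D : Subgroup G) (hD : H₁ ≤ D) (hDi : D.index ≠ 0) :
    ∃ g : G, ∀ a ∈ H₂, g⁻¹ * a * g ∈ D := by
  have hfi : D.FiniteIndex := ⟨hDi⟩
  set N := D.normalCore with hN
  have hNfi : N.FiniteIndex := Subgroup.finiteIndex_normalCore D
  obtain ⟨q, hq⟩ := h N hNfi.index_ne_zero
  obtain ⟨g, rfl⟩ := QuotientGroup.mk_surjective q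
  refine ⟨g, fun a ha => ?_⟩
  have : ((QuotientGroup.mk g : G ⧸ N))⁻¹ * QuotientGroup.mk a * QuotientGroup.mk g
      ∈ H₁.map (QuotientGroup.mk' N) := hq _ ⟨a, ha, rfl⟩
  obtain ⟨d, hd, hde⟩ := this
  have : QuotientGroup.mk (d⁻¹ * (g⁻¹ * a * g)) = (1 : G ⧸ N) := by
    simpa [QuotientGroup.mk_mul, QuotientGroup.mk_inv, mul_assoc] using
      congrArg (fun x => (QuotientGroup.mk d : G ⧸ N)⁻¹ * x) hde.symm
  have hmem : d⁻¹ * (g⁻¹ * a * g) ∈ N := by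
    rwa [← QuotientGroup.eq_one_iff]
  have : g⁻¹ * a * g = d * (d⁻¹ * (g⁻¹ * a * g)) := by group
  rw [this]
  exact D.mul_mem (hD hd) (D.normalCore_le hmem)
end

section
/- Let F be a finitely generated free group and H a finitely generated subgroup. There is no strictly ascending chain H < H^x < H^{x²} < ... of conjugates of H by powers of a fixed element x ∈ F; equivalently, if x⁻¹Hx > H then the chain of conjugates H^{xⁿ} cannot all be subgroups of F of rank bounded by rank(H). More precisely: if x ∈ F and H ≤ x⁻¹Hx, then H = x⁻¹Hx. -/
private theorem exists_perm_extend {M : Type*} (e : M ≃ M) (X : Finset M) :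
    ∃ σ : Equiv.Perm {q : M // q ∈ X},
      ∀ (q : M) (hq : q ∈ X) (hq' : e q ∈ X), (σ ⟨q, hq⟩ : M) = e q := by
  classical
  let p : {q : M // q ∈ X} → Prop := fun q => e ↑q ∈ X
  let p' : {q : M // q ∈ X} → Prop := fun q => e.symm ↑q ∈ X
  let φ₁ : {q // p q} ≃ {q // p' q} :=
    { toFun := fun r => ⟨⟨e ↑r.1, r.2⟩, by simp [p']⟩
      invFun := fun r => ⟨⟨e.symm ↑r.1, r.2⟩, by simp [p]⟩
      left_inv := fun r => by ext; simp
      right_inv := fun r => by ext; simp }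
  have hcard : Fintype.card {q // ¬ p q} = Fintype.card {q // ¬ p' q} := by
    rw [Fintype.card_subtype_compl, Fintype.card_subtype_compl, Fintype.card_congr φ₁]
  refine ⟨(Equiv.sumCompl p).symm.trans ((Equiv.sumCongr φ₁ (Fintype.equivOfCardEq hcard)).trans
    (Equiv.sumCompl p')), fun q hq hq' => ?_⟩
  have h1 : (Equiv.sumCompl p).symm ⟨q, hq⟩ = Sum.inl ⟨⟨q, hq⟩, hq'⟩ :=
    Equiv.sumCompl_symm_apply_of_pos (p := p) hq'
  simp [h1, φ₁]

private theorem hall_sep (n : ℕ) (H : Subgroup (FreeGroup (Fin n))) (hH : H.FG)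
    (g : FreeGroup (Fin n)) (hg : g ∉ H) :
    ∃ K : Subgroup (FreeGroup (Fin n)), K.FiniteIndex ∧ H ≤ K ∧ g ∉ K := by
  classical
  obtain ⟨T, hT⟩ := hH
  let L : Finset (List (Fin n × Bool)) :=
    (insert g T).biUnion fun w => w.toWord.tails.toFinset
  let X : Finset (FreeGroup (Fin n) ⧸ H) :=
    L.image fun t => (FreeGroup.mk t : FreeGroup (Fin n)) • ((1 : FreeGroup (Fin n)) : _ ⧸ H)
  have hmemX : ∀ (w : FreeGroup (Fin n)), w ∈ insert g T → ∀ t, t <:+ w.toWord →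
      ((FreeGroup.mk t : FreeGroup (Fin n)) • ((1 : FreeGroup (Fin n)) : _ ⧸ H)) ∈ X :=
    fun w hw t ht => Finset.mem_image_of_mem _
      (Finset.mem_biUnion.2 ⟨w, hw, List.mem_toFinset.2 ((List.mem_tails _ _).2 ht)⟩)
  have hone : (((1 : FreeGroup (Fin n))) : FreeGroup (Fin n) ⧸ H) ∈ X := by
    have := hmemX g (Finset.mem_insert_self _ _) [] List.nil_suffix
    simpa [show FreeGroup.mk ([] : List (Fin n × Bool)) = 1 from rfl] using this
  have hσ : ∀ a : Fin n, ∃ σ : Equiv.Perm {q : FreeGroup (Fin n) ⧸ H // q ∈ X},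
      ∀ (q : FreeGroup (Fin n) ⧸ H) (hq : q ∈ X) (hq' : FreeGroup.of a • q ∈ X),
        (σ ⟨q, hq⟩ : FreeGroup (Fin n) ⧸ H) = FreeGroup.of a • q := by
    intro a
    obtain ⟨σ, hs⟩ := exists_perm_extend (MulAction.toPerm (FreeGroup.of a : FreeGroup (Fin n))) X
    exact ⟨σ, fun q hq hq' => hs q hq hq'⟩
  choose σ hσ using hσ
  have hσinv : ∀ (a : Fin n) (q : FreeGroup (Fin n) ⧸ H) (hq : q ∈ X)
      (hq' : (FreeGroup.of a)⁻¹ • q ∈ X),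
      ((σ a)⁻¹ ⟨q, hq⟩ : FreeGroup (Fin n) ⧸ H) = (FreeGroup.of a)⁻¹ • q := by
    intro a q hq hq'
    have hmem : FreeGroup.of a • ((FreeGroup.of a)⁻¹ • q) ∈ X := by rwa [smul_inv_smul]
    have h1 : σ a ⟨(FreeGroup.of a)⁻¹ • q, hq'⟩ = ⟨q, hq⟩ :=
      Subtype.ext (by rw [hσ a _ hq' hmem, smul_inv_smul])
    rw [← h1, ← Equiv.Perm.mul_apply, inv_mul_cancel, Equiv.Perm.one_apply]
  let φ : FreeGroup (Fin n) →* Equiv.Perm {q : FreeGroup (Fin n) ⧸ H // q ∈ X} :=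
    FreeGroup.lift σ
  let p₀ : {q : FreeGroup (Fin n) ⧸ H // q ∈ X} :=
    ⟨((1 : FreeGroup (Fin n)) : FreeGroup (Fin n) ⧸ H), hone⟩
  have key : ∀ l : List (Fin n × Bool),
      (∀ t, t <:+ l → ((FreeGroup.mk t : FreeGroup (Fin n)) •
        ((1 : FreeGroup (Fin n)) : _ ⧸ H)) ∈ X) →
      (φ (FreeGroup.mk l) p₀ : FreeGroup (Fin n) ⧸ H) =
        (FreeGroup.mk l : FreeGroup (Fin n)) • ((1 : FreeGroup (Fin n)) : _ ⧸ H) := by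
    intro l
    induction l with
    | nil =>
      intro _
      have h0 : FreeGroup.mk ([] : List (Fin n × Bool)) = 1 := rfl
      rw [h0, map_one]
      simp [p₀]
    | cons head tail ih =>
      intro hsuf
      have htail : ∀ t : List (Fin n × Bool), t <:+ tail →
          ((FreeGroup.mk t : FreeGroup (Fin n)) • ((1 : FreeGroup (Fin n)) : _ ⧸ H)) ∈ X :=
        fun t ht => hsuf t (ht.trans (List.suffix_cons head tail))
      have h1 : FreeGroup.mk (head :: tail) =
          FreeGroup.mk [head] * FreeGroup.mk tail := by
        rw [FreeGroup.mul_mk]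
        rfl
      rw [h1, map_mul, Equiv.Perm.mul_apply]
      have h2 := ih htail
      have hmemtail : (FreeGroup.mk tail : FreeGroup (Fin n)) •
          ((1 : FreeGroup (Fin n)) : _ ⧸ H) ∈ X := htail tail (List.suffix_refl tail)
      have h3 : φ (FreeGroup.mk tail) p₀ = ⟨_, hmemtail⟩ := Subtype.ext h2
      rw [h3]
      have hmemcons : (FreeGroup.mk (head :: tail) : FreeGroup (Fin n)) •
          ((1 : FreeGroup (Fin n)) : _ ⧸ H) ∈ X := hsuf _ (List.suffix_refl _)
      obtain ⟨a, b⟩ := head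
      cases b with
      | true =>
        have hof : FreeGroup.mk [(a, true)] = FreeGroup.of a := rfl
        have hmul : FreeGroup.of a * FreeGroup.mk tail =
            FreeGroup.mk ((a, true) :: tail) := by
          rw [← hof, FreeGroup.mul_mk]; rfl
        have hmem' : FreeGroup.of a • ((FreeGroup.mk tail : FreeGroup (Fin n)) •
            ((1 : FreeGroup (Fin n)) : _ ⧸ H)) ∈ X := by
          rwa [smul_smul, hmul]
        rw [hof, FreeGroup.lift_apply_of]
        rw [hσ a _ hmemtail hmem', smul_smul, hmul]
      | false =>
        have hof : FreeGroup.mk [(a, false)] = (FreeGroup.of a)⁻¹ := by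
          have h5 : (FreeGroup.of a : FreeGroup (Fin n)) = FreeGroup.mk [(a, true)] := rfl
          rw [h5, FreeGroup.inv_mk]
          rfl
        have hmul : (FreeGroup.of a)⁻¹ * FreeGroup.mk tail =
            FreeGroup.mk ((a, false) :: tail) := by
          rw [← hof, FreeGroup.mul_mk]; rfl
        have hmem' : (FreeGroup.of a)⁻¹ • ((FreeGroup.mk tail : FreeGroup (Fin n)) •
            ((1 : FreeGroup (Fin n)) : _ ⧸ H)) ∈ X := by
          rwa [smul_smul, hmul]
        rw [hof, map_inv, FreeGroup.lift_apply_of]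
        rw [hσinv a _ hmemtail hmem', smul_smul, hmul]
  let K : Subgroup (FreeGroup (Fin n)) :=
    Subgroup.comap φ (MulAction.stabilizer (Equiv.Perm {q : FreeGroup (Fin n) ⧸ H // q ∈ X})
      p₀)
  have hmemK : ∀ w : FreeGroup (Fin n), w ∈ K ↔ φ w p₀ = p₀ := by
    intro w
    rw [Subgroup.mem_comap, MulAction.mem_stabilizer_iff]
    rfl
  have hwact : ∀ w : FreeGroup (Fin n), w ∈ insert g T →
      (φ w p₀ : FreeGroup (Fin n) ⧸ H) = ((w : FreeGroup (Fin n)) : _ ⧸ H) := by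
    intro w hw
    have := key w.toWord (fun t ht => hmemX w hw t ht)
    rw [FreeGroup.mk_toWord] at this
    rw [this]
    rw [MulAction.Quotient.smul_mk, smul_eq_mul, mul_one]
  refine ⟨K, ?_, ?_, ?_⟩
  · constructor
    rw [Subgroup.index_comap]
    have : ((MulAction.stabilizer (Equiv.Perm {q : FreeGroup (Fin n) ⧸ H // q ∈ X})
        (p₀ : {q : FreeGroup (Fin n) ⧸ H // q ∈ X})).subgroupOf φ.range).FiniteIndex :=
      inferInstance
    exact this.index_ne_zero
  · rw [← hT, Subgroup.closure_le]
    intro w hw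
    have hwH : w ∈ H := hT ▸ Subgroup.subset_closure hw
    rw [SetLike.mem_coe, hmemK]
    refine Subtype.ext ?_
    rw [hwact w (Finset.mem_insert_of_mem hw)]
    exact QuotientGroup.eq.2 (by simpa using hwH)
  · rw [hmemK]
    intro hcon
    have := congrArg Subtype.val hcon
    rw [hwact g (Finset.mem_insert_self _ _)] at this
    exact hg (by simpa using QuotientGroup.eq.1 this)

/-- In a free group of finite rank, a finitely generated subgroup cannot be properly
contained in its own conjugate: if `H ≤ x⁻¹Hx` then `H = x⁻¹Hx`.
Here membership in `x⁻¹Hx` is expressed by `h ∈ x⁻¹Hx ↔ x*h*x⁻¹ ∈ H`. -/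
theorem stmt3 (n : ℕ) (H : Subgroup (FreeGroup (Fin n))) (hH : H.FG)
    (x : FreeGroup (Fin n))
    (h : H ≤ Subgroup.map (MulAut.conj x⁻¹).toMonoidHom H) :
    H = Subgroup.map (MulAut.conj x⁻¹).toMonoidHom H := by
  classical
  have hxHx : ∀ c ∈ H, x * c * x⁻¹ ∈ H := by
    intro c hc
    obtain ⟨d, hd, hdc⟩ := h hc
    have : d = x * c * x⁻¹ := by
      have hdc' : x⁻¹ * d * x = c := by simpa [MulAut.conj_apply] using hdc
      rw [← hdc']
      group
    rwa [this] at hd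
  refine le_antisymm h ?_
  rintro a ha
  rw [Subgroup.mem_map] at ha
  obtain ⟨c, hc, rfl⟩ := ha
  by_contra hnot
  obtain ⟨K, hKfi, hHK, haK⟩ := hall_sep n H hH _ hnot
  haveI : K.FiniteIndex := hKfi
  set N := K.normalCore with hN
  haveI : N.Normal := Subgroup.normalCore_normal K
  haveI : N.FiniteIndex := Subgroup.finiteIndex_normalCore K
  haveI : Finite (FreeGroup (Fin n) ⧸ N) := Subgroup.finite_quotient_of_finiteIndex (H := N)
  set π := QuotientGroup.mk' N with hπ
  set S := H.map π with hS
  set S' := S.map (MulAut.conj (π x)).toMonoidHom with hS'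
  have hS'S : S' ≤ S := by
    rintro y hy
    obtain ⟨z, hzS, rfl⟩ := Subgroup.mem_map.1 hy
    obtain ⟨c', hc', rfl⟩ := Subgroup.mem_map.1 hzS
    refine Subgroup.mem_map.2 ⟨x * c' * x⁻¹, hxHx c' hc', ?_⟩
    simp only [MulEquiv.coe_toMonoidHom, MulAut.conj_apply, map_mul, map_inv]
  have hcard : Nat.card S = Nat.card S' :=
    Nat.card_congr (Subgroup.equivMapOfInjective S _
      (MulAut.conj (π x)).injective).toEquiv
  have hSeq : S' = S := by
    apply SetLike.coe_injective
    refine Set.eq_of_subset_of_ncard_le hS'S ?_ (Set.toFinite _)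
    rw [← Nat.card_coe_set_eq, ← Nat.card_coe_set_eq]
    exact le_of_eq hcard
  have hπcS : π c ∈ S := Subgroup.mem_map.2 ⟨c, hc, rfl⟩
  rw [← hSeq] at hπcS
  obtain ⟨s, hsS, hconj⟩ := Subgroup.mem_map.1 hπcS
  obtain ⟨h₀, hh₀, rfl⟩ := Subgroup.mem_map.1 hsS
  have hkey : π (x⁻¹ * c * x) = π h₀ := by
    have : π c = π x * π h₀ * (π x)⁻¹ := by
      simpa [MulAut.conj_apply] using hconj.symm
    rw [map_mul, map_mul, map_inv, this]
    group
  have hmemN : h₀⁻¹ * (x⁻¹ * c * x) ∈ N := by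
    have : π (h₀⁻¹ * (x⁻¹ * c * x)) = 1 := by
      rw [map_mul, map_inv, hkey]
      group
    rwa [← QuotientGroup.ker_mk' N, MonoidHom.mem_ker]
  have : x⁻¹ * c * x ∈ K := by
    have h1 : h₀ ∈ K := hHK hh₀
    have h2 : h₀⁻¹ * (x⁻¹ * c * x) ∈ K := K.normalCore_le hmemN
    have := K.mul_mem h1 h2
    rwa [← mul_assoc, mul_inv_cancel, one_mul] at this
  exact haK (by simpa [MulAut.conj_apply] using this)
end

section
/- Let G be a finitely generated virtually free group. If G is subgroup into-conjugacy separable (SICS), then G is subgroup conjugacy separable (SCS). -/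
/-- Two subgroups are conjugate. -/
def ConjSubgroups {G : Type*} [Group G] (A B : Subgroup G) : Prop :=
  ∃ g : G, Subgroup.map (MulAut.conj g).toMonoidHom A = B

/-- `G` is subgroup into-conjugacy separable. -/
def SICS (G : Type*) [Group G] : Prop :=
  ∀ H₁ H₂ : Subgroup G, H₁.FG → H₂.FG → ¬ ConjInto H₂ H₁ →
    ∃ (Q : Type) (_ : Group Q) (_ : Finite Q) (φ : G →* Q),
      Function.Surjective φ ∧ ¬ ConjInto (H₂.map φ) (H₁.map φ)

/-- `G` is subgroup conjugacy separable. -/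
def SCS (G : Type*) [Group G] : Prop :=
  ∀ H₁ H₂ : Subgroup G, H₁.FG → H₂.FG → ¬ ConjSubgroups H₁ H₂ →
    ∃ (Q : Type) (_ : Group Q) (_ : Finite Q) (φ : G →* Q),
      Function.Surjective φ ∧ ¬ ConjSubgroups (H₁.map φ) (H₂.map φ)

open Subgroup

universe u

/-- Marshall Hall's theorem: finitely generated subgroups of free groups are separable
(weak form: contained in a finite-index subgroup avoiding a given outside element). -/
theorem hall_sep_s5 {β : Type*} (K : Subgroup (FreeGroup β)) (hK : K.FG) (x : FreeGroup β)
    (hx : x ∉ K) : ∃ M : Subgroup (FreeGroup β), M.index ≠ 0 ∧ K ≤ M ∧ x ∉ M := by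
  classical
  obtain ⟨S, hS⟩ := hK
  set W : Finset (FreeGroup β) := insert x S with hW
  set D : Set (FreeGroup β ⧸ K) :=
    ⋃ w ∈ W, (fun L => ((FreeGroup.mk L : FreeGroup β) : FreeGroup β ⧸ K)) ''
      {L | L <:+ (FreeGroup.toWord w)} with hD
  have hDfin : D.Finite := by
    apply Set.Finite.biUnion W.finite_toSet
    intro w _
    apply Set.Finite.image
    have : {L | L <:+ (FreeGroup.toWord w)} ⊆ ↑(FreeGroup.toWord w).tails.toFinset := by
      intro L hL
      simp [List.mem_tails]
      exact hL
    exact Set.Finite.subset (FreeGroup.toWord w).tails.toFinset.finite_toSet this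
  have hmemD : ∀ w ∈ W, ∀ L, L <:+ (FreeGroup.toWord w) →
      ((FreeGroup.mk L : FreeGroup β) : FreeGroup β ⧸ K) ∈ D := by
    intro w hw L hL
    rw [hD]
    exact Set.mem_biUnion hw ⟨L, hL, rfl⟩
  haveI : Finite ↥D := hDfin.to_subtype
  haveI : Fintype ↥D := Fintype.ofFinite _
  -- partial injections extended to permutations
  have hconstr : ∀ b : β, ∃ σ : Equiv.Perm ↥D,
      (∀ (c : ↥D) (h : FreeGroup.of b • (c : FreeGroup β ⧸ K) ∈ D),
        ((σ c : ↥D) : FreeGroup β ⧸ K) = FreeGroup.of b • (c : FreeGroup β ⧸ K)) := by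
    intro b
    set p : ↥D → Prop := fun c => FreeGroup.of b • (c : FreeGroup β ⧸ K) ∈ D with hp
    set q : ↥D → Prop := fun c => (FreeGroup.of b)⁻¹ • (c : FreeGroup β ⧸ K) ∈ D with hq
    let e : {c // p c} ≃ {c // q c} :=
    { toFun := fun c => ⟨⟨FreeGroup.of b • (c : ↥D), c.2⟩, by
        simp only [hq, inv_smul_smul]; exact (c : ↥D).2⟩
      invFun := fun c => ⟨⟨(FreeGroup.of b)⁻¹ • (c : ↥D), c.2⟩, by
        simp only [hp, smul_inv_smul]; exact (c : ↥D).2⟩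
      left_inv := fun c => by
        apply Subtype.ext; apply Subtype.ext
        simp [inv_smul_smul]
      right_inv := fun c => by
        apply Subtype.ext; apply Subtype.ext
        simp [smul_inv_smul] }
    refine ⟨e.extendSubtype, fun c h => ?_⟩
    rw [Equiv.extendSubtype_apply_of_mem e c h]
    rfl
  choose σ hσ using hconstr
  have hσinv : ∀ (b : β) (c : ↥D) (h : (FreeGroup.of b)⁻¹ • (c : FreeGroup β ⧸ K) ∈ D),
      (((σ b)⁻¹ c : ↥D) : FreeGroup β ⧸ K) = (FreeGroup.of b)⁻¹ • (c : FreeGroup β ⧸ K) := by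
    intro b c h
    set c' : ↥D := ⟨(FreeGroup.of b)⁻¹ • (c : FreeGroup β ⧸ K), h⟩ with hc'
    have h2 : σ b c' = c := by
      apply Subtype.ext
      rw [hσ b c' (by simp only [hc', smul_inv_smul]; exact c.2)]
      simp [hc', smul_inv_smul]
    have h3 : (σ b)⁻¹ c = c' := by rw [← h2, Equiv.Perm.inv_def, Equiv.symm_apply_apply]
    rw [h3]
  set φ : FreeGroup β →* Equiv.Perm ↥D := FreeGroup.lift σ with hφ
  have hPT : ((1 : FreeGroup β) : FreeGroup β ⧸ K) ∈ D := by
    have := hmemD x (Finset.mem_insert_self x S) [] List.nil_suffix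
    rwa [← FreeGroup.one_eq_mk] at this
  set PT : ↥D := ⟨_, hPT⟩ with hPTdef
  have smul_coe : ∀ (g a : FreeGroup β), g • ((a : FreeGroup β ⧸ K)) = ((g * a : FreeGroup β) : FreeGroup β ⧸ K) := by
    intro g a
    exact MulAction.Quotient.smul_mk K g a
  have eval : ∀ L : List (β × Bool),
      (∀ s, s <:+ L → ((FreeGroup.mk s : FreeGroup β) : FreeGroup β ⧸ K) ∈ D) →
      ((φ (FreeGroup.mk L) PT : ↥D) : FreeGroup β ⧸ K) = ((FreeGroup.mk L : FreeGroup β) : FreeGroup β ⧸ K) := by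
    intro L
    induction L with
    | nil =>
      intro _
      rw [← FreeGroup.one_eq_mk, map_one]
      rfl
    | cons a L ih =>
      intro h
      obtain ⟨b, ε⟩ := a
      have hL : ∀ s, s <:+ L → ((FreeGroup.mk s : FreeGroup β) : FreeGroup β ⧸ K) ∈ D :=
        fun s hs => h s (hs.trans (List.suffix_cons _ _))
      have hcoe := ih hL
      have key : FreeGroup.mk ((b, ε) :: L) = FreeGroup.mk [(b, ε)] * FreeGroup.mk L := by
        rw [FreeGroup.mul_mk]; rfl
      rw [key, map_mul, Equiv.Perm.mul_apply]
      cases ε with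
      | true =>
        have h1 : FreeGroup.mk [(b, true)] = FreeGroup.of b := rfl
        have hofmul : FreeGroup.of b * FreeGroup.mk L = FreeGroup.mk ((b, true) :: L) := by
          rw [key, h1]
        have hin : FreeGroup.of b • ((φ (FreeGroup.mk L) PT : ↥D) : FreeGroup β ⧸ K) ∈ D := by
          rw [hcoe, smul_coe, hofmul]
          exact h _ (List.suffix_refl _)
        rw [h1, hφ, FreeGroup.lift_apply_of]
        rw [hσ b _ hin, hcoe, smul_coe, hofmul, key]
      | false =>
        have h1 : FreeGroup.mk [(b, false)] = (FreeGroup.of b)⁻¹ := by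
          have h2 : (FreeGroup.mk [(b, true)] : FreeGroup β)⁻¹ = FreeGroup.mk [(b, false)] := by
            rw [FreeGroup.inv_mk]; rfl
          rw [← h2]; rfl
        have hofmul : (FreeGroup.of b)⁻¹ * FreeGroup.mk L = FreeGroup.mk ((b, false) :: L) := by
          rw [key, h1]
        have hin : (FreeGroup.of b)⁻¹ • ((φ (FreeGroup.mk L) PT : ↥D) : FreeGroup β ⧸ K) ∈ D := by
          rw [hcoe, smul_coe, hofmul]
          exact h _ (List.suffix_refl _)
        rw [h1, map_inv, hφ, FreeGroup.lift_apply_of]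
        rw [hσinv b _ hin, hcoe, smul_coe, hofmul, key]
  have evalw : ∀ w : FreeGroup β, w ∈ W →
      ((φ w PT : ↥D) : FreeGroup β ⧸ K) = ((w : FreeGroup β) : FreeGroup β ⧸ K) := by
    intro w hw
    conv_lhs => rw [← FreeGroup.mk_toWord (x := w)]
    rw [eval (FreeGroup.toWord w) (fun s hs => hmemD w hw s hs), FreeGroup.mk_toWord]
  set M : Subgroup (FreeGroup β) :=
    Subgroup.comap φ (MulAction.stabilizer (Equiv.Perm ↥D) PT) with hM
  have hKM : K ≤ M := by
    rw [← hS, Subgroup.closure_le]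
    intro w hw
    have h1 : ((φ w PT : ↥D) : FreeGroup β ⧸ K) = ((1 : FreeGroup β) : FreeGroup β ⧸ K) := by
      rw [evalw w (Finset.mem_insert_of_mem hw)]
      apply (QuotientGroup.eq (s := K)).mpr
      simpa using (hS ▸ Subgroup.subset_closure hw : w ∈ K)
    have : φ w PT = PT := Subtype.ext h1
    simpa [hM, MulAction.mem_stabilizer_iff, Equiv.Perm.smul_def] using this
  have hxM : x ∉ M := by
    intro hmem
    have h1 : φ x PT = PT := by
      simpa [hM, MulAction.mem_stabilizer_iff, Equiv.Perm.smul_def] using hmem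
    have h2 : ((x : FreeGroup β) : FreeGroup β ⧸ K) = ((1 : FreeGroup β) : FreeGroup β ⧸ K) := by
      rw [← evalw x (Finset.mem_insert_self x S), h1]
    have := (QuotientGroup.eq (s := K)).mp h2
    simp at this
    exact hx this
  refine ⟨M, ?_, hKM, hxM⟩
  rw [hM, Subgroup.index_comap]
  haveI : Finite (Equiv.Perm ↥D) := by infer_instance
  haveI : Finite ↥φ.range := by infer_instance
  rw [Subgroup.relIndex]
  exact Subgroup.index_ne_zero_of_finite

lemma normalCore_index_ne_zero {G : Type*} [Group G] (H : Subgroup G) (h : H.index ≠ 0) :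
    H.normalCore.index ≠ 0 := by
  classical
  haveI : Finite (G ⧸ H) := by
    rw [Subgroup.index] at h
    exact (Nat.card_ne_zero.mp h).2
  haveI : Fintype (G ⧸ H) := Fintype.ofFinite _
  rw [Subgroup.normalCore_eq_ker, Subgroup.index_ker]
  rw [Nat.card_ne_zero]
  exact ⟨⟨1⟩, inferInstance⟩

lemma subgroup_fg_map {G G' : Type*} [Group G] [Group G'] (f : G →* G') {H : Subgroup G}
    (h : H.FG) : (H.map f).FG := by
  classical
  obtain ⟨S, hS⟩ := h
  exact ⟨S.image f, by rw [Finset.coe_image, ← MonoidHom.map_closure, hS]⟩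

lemma relIndex_map_equiv {G G' : Type*} [Group G] [Group G'] (e : G ≃* G') (A B : Subgroup G) :
    (A.map e.toMonoidHom).relIndex (B.map e.toMonoidHom) = A.relIndex B := by
  rw [MulEquiv.toMonoidHom_eq_coe, Subgroup.map_equiv_eq_comap_symm e A, Subgroup.relIndex_comap]
  congr 1
  rw [Subgroup.map_map]
  convert Subgroup.map_id B
  ext z
  simp

/-- Separability in a virtually free group, for f.g. subgroups of the finite-index
free subgroup. -/
theorem sep_lemma {G : Type u} [Group G] (F : Subgroup G) (hF : F.index ≠ 0)
    {n : ℕ} (e : ↥F ≃* FreeGroup (Fin n)) (K : Subgroup G) (hKF : K ≤ F) (hK : K.FG)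
    (x : G) (hxF : x ∈ F) (hx : x ∉ K) :
    ∃ (Q : Type u) (_ : Group Q) (_ : Finite Q) (q : G →* Q), q x ∉ K.map q := by
  classical
  set K' : Subgroup (FreeGroup (Fin n)) := (K.subgroupOf F).map e.toMonoidHom with hK'
  have hKsofg : (K.subgroupOf F).FG := by
    haveI : Group.FG ↥K := (Group.fg_iff_subgroup_fg K).mpr hK
    haveI : Group.FG ↥(K.subgroupOf F) :=
      Group.fg_of_surjective (f := ((Subgroup.subgroupOfEquivOfLe hKF).symm).toMonoidHom)
        (Subgroup.subgroupOfEquivOfLe hKF).symm.surjective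
    exact (Group.fg_iff_subgroup_fg _).mp inferInstance
  have hK'fg : K'.FG := subgroup_fg_map _ hKsofg
  set x' : FreeGroup (Fin n) := e ⟨x, hxF⟩ with hx'def
  have hx' : x' ∉ K' := by
    rintro ⟨⟨y, hy⟩, hyK, hyx⟩
    have : (⟨y, hy⟩ : ↥F) = ⟨x, hxF⟩ := e.injective hyx
    rw [this] at hyK
    exact hx ((Subgroup.mem_subgroupOf).mp hyK)
  obtain ⟨M', hM'i, hKM', hxM'⟩ := hall_sep_s5 K' hK'fg x' hx'
  set MF : Subgroup ↥F := M'.comap e.toMonoidHom with hMF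
  have hMFi : MF.index ≠ 0 := by
    rw [hMF, Subgroup.index_comap_of_surjective M' e.surjective]
    exact hM'i
  set MG : Subgroup G := MF.map F.subtype with hMG
  have hKMG : K ≤ MG := by
    intro k hk
    refine ⟨⟨k, hKF hk⟩, ?_, rfl⟩
    exact hKM' ⟨⟨k, hKF hk⟩, (Subgroup.mem_subgroupOf).mpr hk, rfl⟩
  have hxMG : x ∉ MG := by
    rintro ⟨⟨y, hy⟩, hyM, hyx⟩
    have : (⟨y, hy⟩ : ↥F) = ⟨x, hxF⟩ := Subtype.ext hyx
    rw [this] at hyM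
    exact hxM' hyM
  have hMGle : MG ≤ F := Subgroup.map_subtype_le _
  have hMGi : MG.index ≠ 0 := by
    have h1 := Subgroup.relIndex_mul_index hMGle
    have h2 : MG.relIndex F = MF.index := by
      rw [Subgroup.relIndex, Subgroup.subgroupOf, hMG,
        Subgroup.comap_map_eq_self_of_injective F.subtype_injective]
    intro h0
    rw [h0] at h1
    rcases Nat.mul_eq_zero.mp h1 with h | h
    · rw [h2] at h; exact hMFi h
    · exact hF h
  set N : Subgroup G := MG.normalCore with hN
  have hNi : N.index ≠ 0 := normalCore_index_ne_zero _ hMGi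
  haveI : Finite (G ⧸ N) := by
    rw [Subgroup.index] at hNi
    exact (Nat.card_ne_zero.mp hNi).2
  refine ⟨G ⧸ N, inferInstance, inferInstance, QuotientGroup.mk' N, ?_⟩
  rintro ⟨k, hk, hqk⟩
  obtain ⟨z, hz, hkz⟩ := (QuotientGroup.mk'_eq_mk' N).mp hqk
  apply hxMG
  rw [← hkz]
  exact MG.mul_mem (hKMG hk) (MG.normalCore_le hz)

/-- In a virtually free group, conjugation cannot send a f.g. subgroup
properly into itself. -/
theorem conj_surj_of_conj_le {G : Type u} [Group G] (F : Subgroup G) (hF : F.index ≠ 0)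
    {n : ℕ} (e : ↥F ≃* FreeGroup (Fin n)) (H : Subgroup G) (hH : H.FG) (t : G)
    (ht : ∀ a ∈ H, t⁻¹ * a * t ∈ H) : ∀ a ∈ H, ∃ b ∈ H, t⁻¹ * b * t = a := by
  classical
  set F₀ : Subgroup G := F.normalCore with hF₀def
  haveI : F₀.Normal := Subgroup.normalCore_normal F
  have hF₀i : F₀.index ≠ 0 := normalCore_index_ne_zero F hF
  have hF₀F : F₀ ≤ F := Subgroup.normalCore_le F
  set A : Subgroup G := H ⊓ F₀ with hAdef
  have hAH : A ≤ H := inf_le_left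
  have hAF₀ : A ≤ F₀ := inf_le_right
  have hArel : A.relIndex H ≠ 0 := by
    have h1 : A.relIndex H = F₀.relIndex H := by
      rw [hAdef, inf_comm, Subgroup.inf_relIndex_right]
    rw [h1]
    intro h0
    exact hF₀i (Nat.eq_zero_of_zero_dvd (h0 ▸ Subgroup.relIndex_dvd_index_of_normal F₀ H))
  have hAfg : A.FG := by
    haveI : Group.FG ↥H := (Group.fg_iff_subgroup_fg H).mpr hH
    haveI : (A.subgroupOf H).FiniteIndex := ⟨hArel⟩
    haveI : Group.FG ↥(A.subgroupOf H) := Subgroup.fg_of_index_ne_zero _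
    haveI : Group.FG ↥A :=
      Group.fg_of_surjective (f := (Subgroup.subgroupOfEquivOfLe hAH).toMonoidHom)
        (Subgroup.subgroupOfEquivOfLe hAH).surjective
    exact (Group.fg_iff_subgroup_fg A).mp inferInstance
  set c : G ≃* G := MulAut.conj t⁻¹ with hcdef
  have hcval : ∀ a : G, c a = t⁻¹ * a * t := by
    intro a; simp [hcdef, MulAut.conj]
  set K : Subgroup G := A.map c.toMonoidHom with hKdef
  have hKA : K ≤ A := by
    rintro _ ⟨a, ha, rfl⟩
    rw [show c.toMonoidHom a = t⁻¹ * a * t from hcval a]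
    refine ⟨ht a ha.1, ?_⟩
    have := (‹F₀.Normal›).conj_mem a ha.2 t⁻¹
    simpa using this
  have hKfg : K.FG := subgroup_fg_map _ hAfg
  -- The heart: K = A, via separability.
  have hKeqA : K = A := by
    refine le_antisymm hKA fun x hxA => ?_
    by_contra hxK
    obtain ⟨Q, _, _, q, hq⟩ := sep_lemma F hF e K ((hKA.trans hAF₀).trans hF₀F) hKfg x
      (hF₀F (hAF₀ hxA)) hxK
    apply hq
    -- in the finite quotient, the images of K and A coincide
    set e2 : Q ≃* Q := MulAut.conj ((q t)⁻¹) with he2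
    have h2 : K.map q = (A.map q).map (e2 : Q →* Q) := by
      rw [hKdef, Subgroup.map_map, Subgroup.map_map]
      congr 1
      ext a
      simp [hcval, he2, MulAut.conj]
    have hcard : Nat.card ↥(K.map q) = Nat.card ↥(A.map q) := by
      rw [h2]
      exact (Nat.card_congr (MulEquiv.subgroupMap e2 (A.map q)).toEquiv).symm
    have hle : K.map q ≤ A.map q := Subgroup.map_mono hKA
    have hseteq : ((K.map q : Subgroup Q) : Set Q) = ((A.map q : Subgroup Q) : Set Q) := by
      apply Set.eq_of_subset_of_ncard_le hle
      rw [← Nat.card_coe_set_eq, ← Nat.card_coe_set_eq]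
      exact le_of_eq hcard.symm
    have : K.map q = A.map q := SetLike.coe_injective hseteq
    rw [this]
    exact ⟨x, hxA, rfl⟩
  -- index bookkeeping to conclude t⁻¹ H t = H
  set B : Subgroup G := H.map c.toMonoidHom with hBdef
  have hAB : A ≤ B := by
    conv_lhs => rw [← hKeqA]
    exact Subgroup.map_mono hAH
  have hBH : B ≤ H := by
    rintro _ ⟨a, ha, rfl⟩
    rw [show c.toMonoidHom a = t⁻¹ * a * t from hcval a]
    exact ht a ha
  have hrel1 : A.relIndex B = A.relIndex H := by
    conv_lhs => rw [← hKeqA]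
    exact relIndex_map_equiv c A H
  have hmul := Subgroup.relIndex_mul_relIndex A B H hAB hBH
  rw [hrel1] at hmul
  have hBrel : B.relIndex H = 1 := by
    have := mul_left_cancel₀ hArel (hmul.trans (mul_one _).symm)
    exact this
  have hHB : H ≤ B := by
    have : B.subgroupOf H = ⊤ := Subgroup.index_eq_one.mp hBrel
    exact Subgroup.subgroupOf_eq_top.mp this
  intro a ha
  obtain ⟨b, hb, hba⟩ := hHB ha
  exact ⟨b, hb, by rw [← hba]; exact (hcval b).symm⟩


lemma conjSubgroups_to_into₁ {G : Type*} [Group G] {A B : Subgroup G}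
    (h : ConjSubgroups A B) : ConjInto B A := by
  obtain ⟨g, hg⟩ := h
  refine ⟨g, fun b hb => ?_⟩
  rw [← hg] at hb
  obtain ⟨a, ha, rfl⟩ := hb
  have hE : g⁻¹ * ((MulAut.conj g).toMonoidHom a) * g = a := by
    simp [MulAut.conj]
    group
  rwa [hE]

lemma conjSubgroups_to_into₂ {G : Type*} [Group G] {A B : Subgroup G}
    (h : ConjSubgroups A B) : ConjInto A B := by
  obtain ⟨g, hg⟩ := h
  refine ⟨g⁻¹, fun a ha => ?_⟩
  rw [← hg]
  refine ⟨a, ha, ?_⟩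
  simp [MulAut.conj]


theorem stmt5 {G : Type*} [Group G] (hfg : Group.FG G)
    (hvf : ∃ (F : Subgroup G) (n : ℕ), F.index ≠ 0 ∧ Nonempty (F ≃* FreeGroup (Fin n)))
    (hsics : SICS G) : SCS G := by
  obtain ⟨F, n, hFi, ⟨e⟩⟩ := hvf
  intro H₁ H₂ h1fg h2fg hncs
  by_cases hc1 : ConjInto H₂ H₁
  · by_cases hc2 : ConjInto H₁ H₂
    · exfalso
      apply hncs
      obtain ⟨h, hh⟩ := hc2
      obtain ⟨g, hg⟩ := hc1
      have ht : ∀ a ∈ H₁, (h * g)⁻¹ * a * (h * g) ∈ H₁ := by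
        intro a ha
        have h3 := hg _ (hh a ha)
        have hE : (h * g)⁻¹ * a * (h * g) = g⁻¹ * (h⁻¹ * a * h) * g := by group
        rwa [hE]
      have key := conj_surj_of_conj_le F hFi e H₁ h1fg (h * g) ht
      refine ⟨g, le_antisymm ?_ ?_⟩
      · rintro _ ⟨a, ha, rfl⟩
        obtain ⟨b, hb, hba⟩ := key a ha
        have hval : (MulAut.conj g).toMonoidHom a = h⁻¹ * b * h := by
          rw [← hba]
          simp [MulAut.conj]
          group
        rw [hval]
        exact hh b hb
      · intro z hz
        refine ⟨g⁻¹ * z * g, hg z hz, ?_⟩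
        simp [MulAut.conj]
        group
    · obtain ⟨Q, hQg, hQf, φ, hsurj, hnci⟩ := hsics H₂ H₁ h2fg h1fg hc2
      exact ⟨Q, hQg, hQf, φ, hsurj, fun hcs => hnci (conjSubgroups_to_into₂ hcs)⟩
  · obtain ⟨Q, hQg, hQf, φ, hsurj, hnci⟩ := hsics H₁ H₂ h1fg h2fg hc1
    exact ⟨Q, hQg, hQf, φ, hsurj, fun hcs => hnci (conjSubgroups_to_into₁ hcs)⟩
end

section
/- Let G = G₁ * G₂ * ... * G_l * F be a free product of groups, and let H = ⟨h₁,...,h_r⟩ be a nontrivial finitely generated subgroup of G such that each generator hᵢ and each product hᵢhⱼ is conjugate into one of the factors G_k. Then H is conjugate into some single factor G_s. -/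
open Monoid

/-- The canonical copy of the factor indexed by `i` inside the free product. -/
def factorCopy {ι : Type*} (K : ι → Type*) [∀ i, Group (K i)] (i : ι) :
    Subgroup (CoprodI K) :=
  (CoprodI.of (M := K) (i := i)).range


section AuxStmt8
open CoprodI
set_option linter.unusedSectionVars false
namespace Stmt8Aux
variable {ι : Type*} {K : ι → Type*} [∀ i, Group (K i)] [DecidableEq ι] [∀ i, DecidableEq (K i)]

/-- product of a list of letters -/
def prodL (L : List (Σ i, K i)) : CoprodI K :=
  (L.map fun l => CoprodI.of l.2).prod

@[simp] lemma prodL_nil : prodL ([] : List (Σ i, K i)) = 1 := rfl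

@[simp] lemma prodL_cons (x : (Σ i, K i)) (L : List (Σ i, K i)) :
    prodL (x :: L) = CoprodI.of x.2 * prodL L := by
  simp [prodL]

lemma prodL_append (L₁ L₂ : List (Σ i, K i)) :
    prodL (L₁ ++ L₂) = prodL L₁ * prodL L₂ := by
  simp [prodL]

lemma word_prod_eq (w : Word K) : w.prod = prodL w.toList := rfl

lemma equiv_word_prod (w : Word K) : Word.equiv w.prod = w :=
  Word.equiv.apply_symm_apply w

lemma prod_equiv_word (x : CoprodI K) : (Word.equiv x).prod = x :=
  Word.equiv.symm_apply_apply x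

lemma equiv_mk (L : List (Σ i, K i)) (h1 : ∀ l ∈ L, Sigma.snd l ≠ 1)
    (h2 : L.Chain' fun l l' => Sigma.fst l ≠ Sigma.fst l') :
    Word.equiv (prodL L) = ⟨L, h1, h2⟩ :=
  equiv_word_prod ⟨L, h1, h2⟩

/-- the canonical reduced word list of an element -/
def lst (x : CoprodI K) : List (Σ i, K i) := (Word.equiv x).toList

lemma lst_eq (L : List (Σ i, K i)) (h1 : ∀ l ∈ L, Sigma.snd l ≠ 1)
    (h2 : L.Chain' fun l l' => Sigma.fst l ≠ Sigma.fst l') :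
    lst (prodL L) = L := by
  rw [lst, equiv_mk L h1 h2]

lemma eq_prodL_lst (x : CoprodI K) : x = prodL (lst x) := by
  conv_lhs => rw [← prod_equiv_word x]
  rfl

lemma lst_ne_one (x : CoprodI K) : ∀ l ∈ lst x, Sigma.snd l ≠ 1 := (Word.equiv x).ne_one

lemma lst_chain (x : CoprodI K) :
    (lst x).Chain' fun l l' => Sigma.fst l ≠ Sigma.fst l' := (Word.equiv x).chain_ne

lemma eq_one_iff_lst (x : CoprodI K) : x = 1 ↔ lst x = [] := by
  constructor
  · rintro rfl
    have h : (1 : CoprodI K) = prodL [] := rfl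
    rw [h, lst_eq] <;> simp [List.Chain']
  · intro h
    rw [eq_prodL_lst x, h, prodL_nil]

/-- reverse and invert a letter list -/
def revInv (L : List (Σ i, K i)) : List (Σ i, K i) :=
  (L.map fun l => ⟨l.1, l.2⁻¹⟩).reverse

@[simp] lemma revInv_nil : revInv ([] : List (Σ i, K i)) = [] := rfl

lemma revInv_length (L : List (Σ i, K i)) : (revInv L).length = L.length := by
  simp [revInv]

lemma revInv_ne_one {L : List (Σ i, K i)} (h : ∀ l ∈ L, Sigma.snd l ≠ 1) :
    ∀ l ∈ revInv L, Sigma.snd l ≠ 1 := by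
  intro l hl
  simp only [revInv, List.mem_reverse, List.mem_map] at hl
  obtain ⟨a, ha, rfl⟩ := hl
  simpa using h a ha

lemma revInv_chain {L : List (Σ i, K i)}
    (h : L.Chain' fun l l' => Sigma.fst l ≠ Sigma.fst l') :
    (revInv L).Chain' fun l l' => Sigma.fst l ≠ Sigma.fst l' := by
  rw [revInv, List.Chain', List.isChain_reverse, List.isChain_map]
  exact h.imp fun a b hab => Ne.symm hab

lemma revInv_head? (L : List (Σ i, K i)) :
    (revInv L).head? = L.getLast?.map fun l => ⟨l.1, l.2⁻¹⟩ := by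
  rw [revInv, List.head?_reverse, List.getLast?_map]

lemma prodL_revInv (L : List (Σ i, K i)) : prodL (revInv L) = (prodL L)⁻¹ := by
  induction L with
  | nil => simp
  | cons x L ih =>
    have h : revInv (x :: L) = revInv L ++ [(⟨x.1, x.2⁻¹⟩ : Σ i, K i)] := by simp [revInv]
    rw [h, prodL_append, ih]
    simp [mul_inv_rev]

lemma lst_inv (x : CoprodI K) : lst x⁻¹ = revInv (lst x) := by
  conv_lhs => rw [eq_prodL_lst x]
  rw [← prodL_revInv, lst_eq _ (revInv_ne_one (lst_ne_one x)) (revInv_chain (lst_chain x))]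


/-- `x` is conjugate into one of the factors -/
def ConjFac (x : CoprodI K) : Prop :=
  ∃ (n : ι) (d : CoprodI K) (g : K n), x = d * CoprodI.of g * d⁻¹

lemma conjFac_conj {x : CoprodI K} (u : CoprodI K) (h : ConjFac x) :
    ConjFac (u⁻¹ * x * u) := by
  obtain ⟨n, d, g, rfl⟩ := h
  exact ⟨n, u⁻¹ * d, g, by group⟩

lemma lst_sandwich {n : ι} {g : K n} (hg : g ≠ 1) (d : CoprodI K)
    (hd : ∀ x ∈ (lst d).getLast?, Sigma.fst x ≠ n) :
    lst (d * CoprodI.of g * d⁻¹) = lst d ++ ⟨n, g⟩ :: revInv (lst d) := by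
  have hprod : prodL (lst d ++ ⟨n, g⟩ :: revInv (lst d)) = d * CoprodI.of g * d⁻¹ := by
    rw [prodL_append, prodL_cons, prodL_revInv, ← eq_prodL_lst]
    simp [mul_assoc]
  have hne : ∀ l ∈ lst d ++ ⟨n, g⟩ :: revInv (lst d), Sigma.snd l ≠ 1 := by
    intro l hl
    rcases List.mem_append.1 hl with hl | hl
    · exact lst_ne_one d l hl
    · rcases List.mem_cons.1 hl with rfl | hl
      · exact hg
      · exact revInv_ne_one (lst_ne_one d) l hl
  have hch : (lst d ++ ⟨n, g⟩ :: revInv (lst d)).Chain'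
      fun l l' => Sigma.fst l ≠ Sigma.fst l' := by
    refine List.isChain_append.2 ⟨lst_chain d, ?_, ?_⟩
    · refine List.isChain_cons.2 ⟨?_, revInv_chain (lst_chain d)⟩
      intro y hy
      rw [revInv_head?] at hy
      rcases hLast : (lst d).getLast? with _ | z
      · rw [hLast] at hy; simp at hy
      · rw [hLast] at hy
        simp only [Option.map_some, Option.mem_def, Option.some.injEq] at hy
        subst hy
        exact (hd z (by rw [hLast]; rfl)).symm
    · intro x hx y hy
      simp only [List.head?_cons, Option.mem_def, Option.some.injEq] at hy
      subst hy
      exact hd x hx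
  rw [← hprod, lst_eq _ hne hch]

lemma merge (n : ι) : ∀ (N : ℕ) (d : CoprodI K) (g : K n), g ≠ 1 → (lst d).length ≤ N →
    ∃ (d' : CoprodI K) (g' : K n), g' ≠ 1 ∧
      d * CoprodI.of g * d⁻¹ = d' * CoprodI.of g' * d'⁻¹ ∧
      ∀ x ∈ (lst d').getLast?, Sigma.fst x ≠ n := by
  intro N
  induction N with
  | zero =>
    intro d g hg hlen
    have hd : d = 1 := (eq_one_iff_lst d).2 (List.eq_nil_of_length_eq_zero
      (Nat.le_zero.mp hlen))
    refine ⟨1, g, hg, by rw [hd], ?_⟩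
    have : lst (1 : CoprodI K) = [] := ((eq_one_iff_lst (1 : CoprodI K)).1 rfl)
    rw [this]; simp
  | succ N ih =>
    intro d g hg hlen
    rcases hL : (lst d).getLast? with _ | x
    · have hd : d = 1 := (eq_one_iff_lst d).2 (List.getLast?_eq_none_iff.1 hL)
      refine ⟨1, g, hg, by rw [hd], ?_⟩
      have : lst (1 : CoprodI K) = [] := ((eq_one_iff_lst (1 : CoprodI K)).1 rfl)
      rw [this]; simp
    · by_cases hx : x.1 = n
      · obtain ⟨i, e⟩ := x
        dsimp at hx; subst hx
        obtain ⟨L₀, hL₀⟩ := List.getLast?_eq_some_iff.1 hL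
        have hne0 : ∀ l ∈ L₀, Sigma.snd l ≠ 1 := fun l hl =>
          lst_ne_one d l (by rw [hL₀]; exact List.mem_append_left _ hl)
        have hch0 : L₀.Chain' fun l l' => Sigma.fst l ≠ Sigma.fst l' := by
          have := lst_chain d
          rw [hL₀] at this
          exact (List.isChain_append.1 this).1
        have hlst0 : lst (prodL L₀) = L₀ := lst_eq _ hne0 hch0
        have hd : d = prodL L₀ * CoprodI.of e := by
          conv_lhs => rw [eq_prodL_lst d, hL₀]
          rw [prodL_append, prodL_cons]
          simp
        have hlen0 : (lst (prodL L₀)).length ≤ N := by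
          rw [hlst0]
          have : (lst d).length = L₀.length + 1 := by rw [hL₀]; simp
          omega
        have hg' : e * g * e⁻¹ ≠ 1 := by
          intro hc
          exact hg (by
            have : g = e⁻¹ * (e * g * e⁻¹) * e := by group
            rw [this, hc]; group)
        obtain ⟨d', g', hg'', heq, hlast⟩ := ih (prodL L₀) (e * g * e⁻¹) hg' hlen0
        refine ⟨d', g', hg'', ?_, hlast⟩
        rw [← heq, hd]
        rw [map_mul, map_mul, map_inv]
        group
      · exact ⟨d, g, hg, rfl, by intro y hy; rw [hL] at hy; rw [Option.mem_def,
          Option.some.injEq] at hy; subst hy; exact hx⟩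

lemma conjFac_odd {x : CoprodI K} (h : ConjFac x) : x = 1 ∨ Odd (lst x).length := by
  obtain ⟨n, d, g, rfl⟩ := h
  by_cases hg : g = 1
  · left; rw [hg]; simp
  obtain ⟨d', g', hg', heq, hlast⟩ := merge n (lst d).length d g hg le_rfl
  right
  rw [heq, lst_sandwich hg' d' hlast]
  refine ⟨(lst d').length, ?_⟩
  simp [revInv_length]
  omega


lemma key_base {k m : ι} (a : K k) (b : K m) (ha : a ≠ 1) (hb : b ≠ 1) (hkm : k ≠ m)
    (hP : ConjFac (CoprodI.of a * CoprodI.of b)) : False := by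
  have hlst : lst (CoprodI.of a * CoprodI.of b) = [⟨k, a⟩, ⟨m, b⟩] := by
    have h0 : CoprodI.of a * CoprodI.of b = prodL [⟨k, a⟩, ⟨m, b⟩] := by simp [prodL]
    rw [h0, lst_eq]
    · intro l hl
      rcases List.mem_cons.1 hl with rfl | hl
      · exact ha
      · rcases List.mem_cons.1 hl with rfl | hl
        · exact hb
        · simp at hl
    · simp [List.Chain', hkm]
  rcases conjFac_odd hP with h1 | hodd
  · rw [eq_one_iff_lst, hlst] at h1
    simp at h1
  · rw [hlst] at hodd
    obtain ⟨t, ht⟩ := hodd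
    simp only [List.length_cons, List.length_nil] at ht
    omega

lemma keyC_one {k m : ι} (a : K k) (b : K m) (ha : a ≠ 1) (hb : b ≠ 1)
    (hP : ConjFac (CoprodI.of a * 1 * CoprodI.of b * (1 : CoprodI K)⁻¹)) :
    k = m ∧ (1 : CoprodI K) ∈ MonoidHom.range (CoprodI.of (M := K) (i := k)) := by
  by_cases hkm : k = m
  · exact ⟨hkm, one_mem _⟩
  · exact (key_base a b ha hb hkm (by simpa using hP)).elim

lemma keyC : ∀ (N : ℕ) (c : CoprodI K) {k m : ι} (a : K k) (b : K m),
    (lst c).length ≤ N → a ≠ 1 → b ≠ 1 →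
    ConjFac (CoprodI.of a * c * CoprodI.of b * c⁻¹) →
    k = m ∧ c ∈ MonoidHom.range (CoprodI.of (M := K) (i := k)) := by
  intro N
  induction N with
  | zero =>
    intro c k m a b hlen ha hb hP
    have hc : c = 1 := (eq_one_iff_lst c).2 (List.eq_nil_of_length_eq_zero
      (Nat.le_zero.mp hlen))
    subst hc
    exact keyC_one a b ha hb hP
  | succ N ih =>
    intro c k m a b hlen ha hb hP
    rcases hL : lst c with _ | ⟨x, L'⟩
    · have hc : c = 1 := (eq_one_iff_lst c).2 hL
      subst hc
      exact keyC_one a b ha hb hP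
    · by_cases hxk : x.1 = k
      · -- peel a letter off the left of c
        obtain ⟨i, f⟩ := x
        dsimp at hxk; subst hxk
        have hf : f ≠ 1 := lst_ne_one c _ (by rw [hL]; exact List.mem_cons_self)
        have hne' : ∀ l ∈ L', Sigma.snd l ≠ 1 := fun l hl =>
          lst_ne_one c l (by rw [hL]; exact List.mem_cons_of_mem _ hl)
        have hch' : L'.Chain' fun l l' => Sigma.fst l ≠ Sigma.fst l' := by
          have h0 := lst_chain c
          rw [hL] at h0
          exact h0.tail
        have hlst' : lst (prodL L') = L' := lst_eq _ hne' hch'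
        have hc : c = CoprodI.of f * prodL L' := by
          conv_lhs => rw [eq_prodL_lst c, hL]
          rw [prodL_cons]
        have hlen' : (lst (prodL L')).length ≤ N := by
          rw [hlst']
          have h0 : (lst c).length = L'.length + 1 := by rw [hL]; simp
          omega
        have ha' : f⁻¹ * a * f ≠ 1 := by
          intro hcon
          exact ha (by
            have h0 : a = f * (f⁻¹ * a * f) * f⁻¹ := by group
            rw [h0, hcon]; group)
        have hP' : ConjFac (CoprodI.of (f⁻¹ * a * f) * prodL L' * CoprodI.of b *
            (prodL L')⁻¹) := by
          have h2 : CoprodI.of (f⁻¹ * a * f) * prodL L' * CoprodI.of b * (prodL L')⁻¹ =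
              (CoprodI.of f)⁻¹ * (CoprodI.of a * c * CoprodI.of b * c⁻¹) * CoprodI.of f := by
            rw [hc, map_mul, map_mul, map_inv]
            group
          rw [h2]
          exact conjFac_conj _ hP
        obtain ⟨hk, hmem⟩ := ih (prodL L') (f⁻¹ * a * f) b hlen' ha' hb hP'
        exact ⟨hk, by rw [hc]; exact mul_mem ⟨f, rfl⟩ hmem⟩
      · rcases hLast : (lst c).getLast? with _ | y
        · rw [List.getLast?_eq_none_iff, hL] at hLast
          cases hLast
        · by_cases hym : y.1 = m
          · -- peel a letter off the right of c
            obtain ⟨j, e⟩ := y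
            dsimp at hym; subst hym
            obtain ⟨L₀, hL₀⟩ := List.getLast?_eq_some_iff.1 hLast
            have hIthe : lst c⁻¹ = ⟨j, e⁻¹⟩ :: revInv L₀ := by
              rw [lst_inv, hL₀]
              simp [revInv]
            have hne_t : ∀ l ∈ revInv L₀, Sigma.snd l ≠ 1 := fun l hl =>
              lst_ne_one c⁻¹ l (by rw [hIthe]; exact List.mem_cons_of_mem _ hl)
            have hch_t : (revInv L₀).Chain' fun l l' => Sigma.fst l ≠ Sigma.fst l' := by
              have h0 := lst_chain c⁻¹
              rw [hIthe] at h0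
              exact h0.tail
            have hlst_t : lst (prodL (revInv L₀)) = revInv L₀ := lst_eq _ hne_t hch_t
            have hcinv : c⁻¹ = CoprodI.of e⁻¹ * prodL (revInv L₀) := by
              conv_lhs => rw [eq_prodL_lst c⁻¹, hIthe]
              rw [prodL_cons]
            have hcc : c = (prodL (revInv L₀))⁻¹ * CoprodI.of e := by
              have h3 : c = (CoprodI.of e⁻¹ * prodL (revInv L₀))⁻¹ := by
                rw [← hcinv, inv_inv]
              rw [h3, mul_inv_rev, map_inv, inv_inv]
            have hlen_t : (lst (prodL (revInv L₀))⁻¹).length ≤ N := by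
              rw [lst_inv, revInv_length, hlst_t, revInv_length]
              have h0 : (lst c).length = L₀.length + 1 := by rw [hL₀]; simp
              omega
            have hb' : e * b * e⁻¹ ≠ 1 := by
              intro hcon
              exact hb (by
                have h0 : b = e⁻¹ * (e * b * e⁻¹) * e := by group
                rw [h0, hcon]; group)
            have hP' : ConjFac (CoprodI.of a * (prodL (revInv L₀))⁻¹ *
                CoprodI.of (e * b * e⁻¹) * ((prodL (revInv L₀))⁻¹)⁻¹) := by
              have h2 : CoprodI.of a * (prodL (revInv L₀))⁻¹ * CoprodI.of (e * b * e⁻¹) *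
                  ((prodL (revInv L₀))⁻¹)⁻¹ =
                  CoprodI.of a * c * CoprodI.of b * c⁻¹ := by
                rw [hcc, map_mul, map_mul, map_inv]
                group
              rw [h2]
              exact hP
            obtain ⟨hk, hmem⟩ := ih (prodL (revInv L₀))⁻¹ a (e * b * e⁻¹) hlen_t ha hb' hP'
            subst hk
            exact ⟨rfl, by rw [hcc]; exact mul_mem hmem ⟨e, rfl⟩⟩
          · -- no cancellation: even length contradiction
            exfalso
            have hprod : prodL ((⟨k, a⟩ : Σ i, K i) :: (lst c ++ ⟨m, b⟩ :: revInv (lst c))) =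
                CoprodI.of a * c * CoprodI.of b * c⁻¹ := by
              rw [prodL_cons, prodL_append, prodL_cons, prodL_revInv, ← eq_prodL_lst]
              simp [mul_assoc]
            have hne : ∀ l ∈ (⟨k, a⟩ : Σ i, K i) :: (lst c ++ ⟨m, b⟩ :: revInv (lst c)),
                Sigma.snd l ≠ 1 := by
              intro l hl
              rcases List.mem_cons.1 hl with rfl | hl
              · exact ha
              · rcases List.mem_append.1 hl with hl | hl
                · exact lst_ne_one c l hl
                · rcases List.mem_cons.1 hl with rfl | hl
                  · exact hb
                  · exact revInv_ne_one (lst_ne_one c) l hl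
            have hch : ((⟨k, a⟩ : Σ i, K i) :: (lst c ++ ⟨m, b⟩ :: revInv (lst c))).Chain'
                fun l l' => Sigma.fst l ≠ Sigma.fst l' := by
              refine List.isChain_cons.2 ⟨?_, ?_⟩
              · intro z hz
                rw [hL] at hz
                simp only [List.cons_append, List.head?_cons, Option.mem_def,
                  Option.some.injEq] at hz
                subst hz
                exact fun hc0 => hxk hc0.symm
              · refine List.isChain_append.2 ⟨lst_chain c, ?_, ?_⟩
                · refine List.isChain_cons.2 ⟨?_, revInv_chain (lst_chain c)⟩
                  intro z hz
                  rw [revInv_head?, hLast] at hz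
                  simp only [Option.map_some, Option.mem_def, Option.some.injEq] at hz
                  subst hz
                  exact fun hc0 => hym hc0.symm
                · intro p hp q hq
                  simp only [List.head?_cons, Option.mem_def, Option.some.injEq] at hq
                  subst hq
                  rw [hLast, Option.mem_def, Option.some.injEq] at hp
                  subst hp
                  exact hym
            have hlstz : lst (CoprodI.of a * c * CoprodI.of b * c⁻¹) =
                (⟨k, a⟩ : Σ i, K i) :: (lst c ++ ⟨m, b⟩ :: revInv (lst c)) := by
              rw [← hprod, lst_eq _ hne hch]
            rcases conjFac_odd hP with h1 | hodd
            · rw [eq_one_iff_lst, hlstz] at h1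
              simp at h1
            · rw [hlstz] at hodd
              obtain ⟨t, ht⟩ := hodd
              simp only [List.length_cons, List.length_append, revInv_length] at ht
              omega

end Stmt8Aux

end AuxStmt8

/-- Lemma 3.2: in a free product `G₁ * ⋯ * G_l * F`, if a nontrivial finitely generated
subgroup `H = ⟨h₁,…,h_r⟩` is such that each `hᵢ` and each `hᵢhⱼ` is conjugate into one of
the factors `G_k`, then `H` is conjugate into a single factor `G_s`. -/
theorem stmt8 (l : ℕ) (K : Option (Fin l) → Type*) [∀ i, Group (K i)]
    (r : ℕ) (h : Fin r → CoprodI K)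
    (hne : Subgroup.closure (Set.range h) ≠ ⊥)
    (h1 : ∀ i, ∃ (k : Fin l) (g : CoprodI K),
      g⁻¹ * h i * g ∈ factorCopy K (some k))
    (h2 : ∀ i j, ∃ (k : Fin l) (g : CoprodI K),
      g⁻¹ * (h i * h j) * g ∈ factorCopy K (some k)) :
    ∃ (s : Fin l) (g : CoprodI K),
      ∀ a ∈ Subgroup.closure (Set.range h), g⁻¹ * a * g ∈ factorCopy K (some s) := by
  classical
  have hex : ∃ i₀, h i₀ ≠ 1 := by
    by_contra hcon
    push_neg at hcon
    apply hne
    rw [eq_bot_iff, Subgroup.closure_le]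
    rintro x ⟨i, rfl⟩
    simp [hcon i, Subgroup.mem_bot]
  obtain ⟨i₀, hi₀⟩ := hex
  obtain ⟨s, g, hg⟩ := h1 i₀
  simp only [factorCopy, MonoidHom.mem_range] at hg
  obtain ⟨a, hao⟩ := hg
  have ha : a ≠ 1 := by
    rintro rfl
    apply hi₀
    have h0 : (1 : CoprodI K) = g⁻¹ * h i₀ * g := by simpa using hao
    have := congrArg (fun z => g * z * g⁻¹) h0
    simpa [mul_assoc] using this.symm
  have hhi₀ : h i₀ = g * CoprodI.of a * g⁻¹ := by
    rw [hao]; group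
  refine ⟨s, g, ?_⟩
  have hgen : ∀ j, g⁻¹ * h j * g ∈ factorCopy K (some s) := by
    intro j
    by_cases hj : h j = 1
    · rw [hj]
      simpa using one_mem (factorCopy K (some s))
    · obtain ⟨kj, gj, hgj⟩ := h1 j
      simp only [factorCopy, MonoidHom.mem_range] at hgj
      obtain ⟨b, hbo⟩ := hgj
      have hb : b ≠ 1 := by
        rintro rfl
        apply hj
        have h0 : (1 : CoprodI K) = gj⁻¹ * h j * gj := by simpa using hbo
        have := congrArg (fun z => gj * z * gj⁻¹) h0
        simpa [mul_assoc] using this.symm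
      have hhj : h j = gj * CoprodI.of b * gj⁻¹ := by
        rw [hbo]; group
      obtain ⟨n, d, hd⟩ := h2 i₀ j
      simp only [factorCopy, MonoidHom.mem_range] at hd
      obtain ⟨gg, hggo⟩ := hd
      have hP : Stmt8Aux.ConjFac (CoprodI.of a * (g⁻¹ * gj) * CoprodI.of b *
          (g⁻¹ * gj)⁻¹) := by
        refine ⟨some n, g⁻¹ * d, gg, ?_⟩
        have hz : CoprodI.of a * (g⁻¹ * gj) * CoprodI.of b * (g⁻¹ * gj)⁻¹ =
            g⁻¹ * (h i₀ * h j) * g := by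
          rw [hhi₀, hhj]; group
        rw [hz, hggo]
        group
      obtain ⟨hk, hmem⟩ := Stmt8Aux.keyC (Stmt8Aux.lst (g⁻¹ * gj)).length (g⁻¹ * gj)
        a b le_rfl ha hb hP
      have hrw : g⁻¹ * h j * g = (g⁻¹ * gj) * CoprodI.of b * (g⁻¹ * gj)⁻¹ := by
        rw [hhj]; group
      rw [hrw]
      have hsk : s = kj := Option.some.inj hk
      subst hsk
      show _ ∈ (CoprodI.of (M := K) (i := some s)).range
      exact mul_mem (mul_mem hmem ⟨b, rfl⟩) (inv_mem hmem)
  intro x hx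
  have hle : Subgroup.closure (Set.range h) ≤
      (factorCopy K (some s)).comap (MulAut.conj g⁻¹).toMonoidHom := by
    rw [Subgroup.closure_le]
    rintro y ⟨j, rfl⟩
    show (MulAut.conj g⁻¹) (h j) ∈ factorCopy K (some s)
    simpa [MulAut.conj_apply] using hgen j
  have hx2 := hle hx
  rw [Subgroup.mem_comap] at hx2
  simpa [MulAut.conj_apply] using hx2
end

section
/- Every finitely generated subgroup of a free group of finite rank is contained, as a free factor, in a subgroup of finite index. That is, for any finitely generated H ≤ F (F free of finite rank), there exists a finite-index subgroup D ≤ F and a subgroup L ≤ D with D = H * L (internal free product). -/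
open Set in

/-- A partial injection on a finite set extends to a permutation fixing the complement. -/
theorem exists_perm_extend_s10 {α : Type*} (A : Set α) (hA : A.Finite) (f : α → α)
    (hf : Function.Injective f) :
    ∃ σ : Equiv.Perm α, (∀ v ∈ A, f v ∈ A → σ v = f v) ∧ (∀ v ∈ A, σ v ∈ A) ∧
      (∀ v ∉ A, σ v = v) := by
  classical
  set s : Set α := A ∩ f ⁻¹' A with hs
  have hsA : s ⊆ A := inter_subset_left
  have hfsA : f '' s ⊆ A := by rintro _ ⟨v, hv, rfl⟩; exact hv.2
  have hsfin : s.Finite := hA.subset hsA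
  have hcard : (A \ s).ncard = (A \ f '' s).ncard := by
    rw [Set.ncard_diff hsA hsfin, Set.ncard_diff hfsA (hsfin.image f), Set.ncard_image_of_injOn hf.injOn]
  have hfin1 : (A \ s).Finite := hA.subset diff_subset
  have hfin2 : (A \ f '' s).Finite := hA.subset diff_subset
  haveI := hfin1.to_subtype
  haveI := hfin2.to_subtype
  have hcard' : Nat.card (A \ s : Set α) = Nat.card (A \ f '' s : Set α) := by
    rwa [Nat.card_coe_set_eq, Nat.card_coe_set_eq]
  obtain ⟨e⟩ : Nonempty ((A \ s : Set α) ≃ (A \ f '' s : Set α)) := by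
    rw [← Finite.card_eq]; exact hcard'
  set g : α → α := fun v =>
    if h : v ∈ s then f v else if h2 : v ∈ A \ s then ↑(e ⟨v, h2⟩) else v with hg
  have hg_s : ∀ v ∈ s, g v = f v := fun v hv => by
    show (if h : v ∈ s then f v else _) = f v
    rw [dif_pos hv]
  have hg_d : ∀ v (h2 : v ∈ A \ s), g v = ↑(e ⟨v, h2⟩) := fun v h2 => by
    show (if h : v ∈ s then f v else if h2' : v ∈ A \ s then ↑(e ⟨v, h2'⟩) else v) = _
    rw [dif_neg h2.2, dif_pos h2]
  have hg_o : ∀ v ∉ A, g v = v := fun v hv => by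
    have h1 : v ∉ s := fun h => hv (hsA h)
    have h2 : v ∉ A \ s := fun h => hv h.1
    show (if h : v ∈ s then f v else if h2' : v ∈ A \ s then ↑(e ⟨v, h2'⟩) else v) = v
    rw [dif_neg h1, dif_neg h2]
  have hbij : Function.Bijective g := by
    constructor
    · intro a b hab
      by_cases ha : a ∈ s <;> by_cases hb : b ∈ s
      · exact hf (by rwa [hg_s a ha, hg_s b hb] at hab)
      · exfalso
        rw [hg_s a ha] at hab
        by_cases hb2 : b ∈ A \ s
        · rw [hg_d b hb2] at hab
          exact (e ⟨b, hb2⟩).2.2 ⟨a, ha, hab⟩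
        · have hbA : b ∉ A := fun h => hb2 ⟨h, hb⟩
          rw [hg_o b hbA] at hab
          exact hbA (hab ▸ hfsA ⟨a, ha, rfl⟩)
      · exfalso
        rw [hg_s b hb] at hab
        by_cases ha2 : a ∈ A \ s
        · rw [hg_d a ha2] at hab
          exact (e ⟨a, ha2⟩).2.2 ⟨b, hb, hab.symm⟩
        · have haA : a ∉ A := fun h => ha2 ⟨h, ha⟩
          rw [hg_o a haA] at hab
          exact haA (hab ▸ hfsA ⟨b, hb, rfl⟩)
      · by_cases ha2 : a ∈ A \ s <;> by_cases hb2 : b ∈ A \ s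
        · rw [hg_d a ha2, hg_d b hb2] at hab
          have : e ⟨a, ha2⟩ = e ⟨b, hb2⟩ := Subtype.ext hab
          exact congrArg Subtype.val (e.injective this)
        · exfalso
          have hbA : b ∉ A := fun h => hb2 ⟨h, hb⟩
          rw [hg_d a ha2, hg_o b hbA] at hab
          exact hbA (hab ▸ (e ⟨a, ha2⟩).2.1)
        · exfalso
          have haA : a ∉ A := fun h => ha2 ⟨h, ha⟩
          rw [hg_o a haA, hg_d b hb2] at hab
          exact haA (hab ▸ (e ⟨b, hb2⟩).2.1)
        · have haA : a ∉ A := fun h => ha2 ⟨h, ha⟩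
          have hbA : b ∉ A := fun h => hb2 ⟨h, hb⟩
          rwa [hg_o a haA, hg_o b hbA] at hab
    · intro a
      by_cases ha : a ∈ A
      · by_cases haf : a ∈ f '' s
        · obtain ⟨v, hv, rfl⟩ := haf
          exact ⟨v, hg_s v hv⟩
        · obtain ⟨⟨v, hv⟩, hev⟩ := e.surjective ⟨a, ha, haf⟩
          exact ⟨v, by rw [hg_d v hv, hev]⟩
      · exact ⟨a, hg_o a ha⟩
  refine ⟨Equiv.ofBijective g hbij, fun v hv hfv => ?_, fun v hv => ?_, fun v hv => hg_o v hv⟩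
  · exact hg_s v ⟨hv, hfv⟩
  · show g v ∈ A
    by_cases h1 : v ∈ s
    · rw [hg_s v h1]; exact hfsA ⟨v, h1, rfl⟩
    · rw [hg_d v ⟨hv, h1⟩]; exact (e ⟨v, ⟨hv, h1⟩⟩).2.1

theorem Equiv.Perm.inv_apply_self {α : Type*} (f : Equiv.Perm α) (x : α) : f⁻¹ (f x) = x :=
  Equiv.symm_apply_apply f x

theorem Equiv.Perm.apply_inv_self {α : Type*} (f : Equiv.Perm α) (x : α) : f (f⁻¹ x) = x :=
  Equiv.apply_symm_apply f x

namespace HallAux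

open Subgroup
open FreeGroup (of)

/-- The data for Hall's construction: a finite "core" set of cosets `C`, permutations `σ x`
extending the genuine coset action where defined inside `C`, and a generating set `S` whose
word-suffixes all have cosets inside `C`. -/
structure Setup (n : ℕ) (H : Subgroup (FreeGroup (Fin n))) where
  C : Set (FreeGroup (Fin n) ⧸ H)
  hfin : C.Finite
  hone : ((1 : FreeGroup (Fin n)) : FreeGroup (Fin n) ⧸ H) ∈ C
  σ : Fin n → Equiv.Perm (FreeGroup (Fin n) ⧸ H)
  hagree : ∀ (x : Fin n) v, v ∈ C → FreeGroup.of x • v ∈ C → σ x v = FreeGroup.of x • v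
  hstab : ∀ (x : Fin n) v, v ∈ C → σ x v ∈ C
  hfix : ∀ (x : Fin n) v, v ∉ C → σ x v = v
  S : Set (FreeGroup (Fin n))
  hS : Subgroup.closure S = H
  hSC : ∀ s ∈ S, ∀ l, l <:+ (FreeGroup.toWord s) →
    ((FreeGroup.mk l : FreeGroup (Fin n)) : FreeGroup (Fin n) ⧸ H) ∈ C
  hreach : ∀ v ∈ C, ∃ l : List (Fin n × Bool),
    (∀ l', l' <:+ l → ((FreeGroup.mk l' : FreeGroup (Fin n)) : FreeGroup (Fin n) ⧸ H) ∈ C) ∧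
    ((FreeGroup.mk l : FreeGroup (Fin n)) : FreeGroup (Fin n) ⧸ H) = v

namespace Setup

variable {n : ℕ} {H : Subgroup (FreeGroup (Fin n))} (T : Setup n H)

local notation "F" => FreeGroup (Fin n)
local notation "Q" => FreeGroup (Fin n) ⧸ H

/-- base point -/
def bp : Q := ((1 : F) : Q)

theorem smul_bp (g : F) : g • (bp (H := H)) = (g : Q) := by
  show ((g * 1 : F) : Q) = (g : Q)
  rw [mul_one]

theorem coe_eq_bp {g : F} : (g : Q) = bp ↔ g ∈ H := by
  rw [bp, QuotientGroup.eq]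
  simp

/-- The letter-permutation action on the coset space. -/
def φ : F →* Equiv.Perm Q := FreeGroup.lift fun x => T.σ x

@[simp] theorem φ_of (x : Fin n) : T.φ (of x) = T.σ x := FreeGroup.lift_apply_of

theorem pure_eq_of (x : Fin n) : (pure x : F) = of x := rfl

theorem σ_inv_mem {x : Fin n} {v : Q} (hv : v ∈ T.C) : (T.σ x)⁻¹ v ∈ T.C := by
  by_contra hmem
  have h2 : T.σ x ((T.σ x)⁻¹ v) = v := Equiv.Perm.apply_inv_self _ _
  rw [T.hfix x _ hmem] at h2
  rw [h2] at hmem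
  exact hmem hv

theorem Cstable (g : F) : ∀ v ∈ T.C, T.φ g v ∈ T.C := by
  induction g using FreeGroup.induction_on with
  | C1 => intro v hv; simpa using hv
  | of x => intro v hv; rw [φ_of]; exact T.hstab x v hv
  | inv_of x _ =>
    intro v hv
    rw [_root_.map_inv, φ_of]
    exact T.σ_inv_mem hv
  | mul g h hg hh =>
    intro v hv
    rw [_root_.map_mul]
    exact hg _ (hh v hv)

/-- A word all of whose suffixes have cosets in the core. -/
def Good (l : List (Fin n × Bool)) : Prop :=
  ∀ l', l' <:+ l → ((FreeGroup.mk l' : F) : Q) ∈ T.C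

theorem Good.tail {a : Fin n × Bool} {l : List (Fin n × Bool)} (h : T.Good (a :: l)) :
    T.Good l := fun l' hl' => h l' (hl'.trans (List.suffix_cons a l))

theorem mk_cons (a : Fin n × Bool) (l : List (Fin n × Bool)) :
    (FreeGroup.mk (a :: l) : F) = FreeGroup.mk [a] * FreeGroup.mk l := by
  rw [FreeGroup.mul_mk]; rfl

theorem mk_single_true (x : Fin n) : (FreeGroup.mk [(x, true)] : F) = of x := rfl

theorem mk_single_false (x : Fin n) : (FreeGroup.mk [(x, false)] : F) = (of x)⁻¹ := by
  rw [show (of x : F) = FreeGroup.mk [(x, true)] from rfl, FreeGroup.inv_mk]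
  simp [FreeGroup.invRev]

theorem path (l : List (Fin n × Bool)) (hl : T.Good l) :
    T.φ (FreeGroup.mk l) (bp (H := H)) = ((FreeGroup.mk l : F) : Q) := by
  induction l with
  | nil =>
    rw [show (FreeGroup.mk [] : F) = 1 from FreeGroup.one_eq_mk.symm]
    simp [bp]
  | cons a l ih =>
    obtain ⟨x, b⟩ := a
    have hCl : ((FreeGroup.mk l : F) : Q) ∈ T.C := hl l (List.suffix_cons _ l)
    have hCal : ((FreeGroup.mk ((x, b) :: l) : F) : Q) ∈ T.C := hl _ List.suffix_rfl
    rw [mk_cons, _root_.map_mul]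
    have ihl := ih (hl.tail)
    cases b with
    | true =>
      rw [mk_single_true, φ_of]
      show T.σ x (T.φ (FreeGroup.mk l) bp) = _
      rw [ihl]
      have : FreeGroup.of x • ((FreeGroup.mk l : F) : Q) = ((FreeGroup.mk ((x, true) :: l) : F) : Q) := by
        rw [mk_cons, mk_single_true]; rfl
      rw [T.hagree x _ hCl (this ▸ hCal), this, mk_cons, mk_single_true]
    | false =>
      rw [mk_single_false, _root_.map_inv, φ_of]
      show (T.σ x)⁻¹ (T.φ (FreeGroup.mk l) bp) = _
      rw [ihl]
      set u : Q := ((FreeGroup.mk ((x, false) :: l) : F) : Q) with hu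
      have key : FreeGroup.of x • u = ((FreeGroup.mk l : F) : Q) := by
        rw [hu, mk_cons, mk_single_false]
        show ((FreeGroup.of x * ((of x)⁻¹ * FreeGroup.mk l) : F) : Q) = _
        rw [mul_inv_cancel_left]
      have hσ : T.σ x u = ((FreeGroup.mk l : F) : Q) := by
        rw [T.hagree x u hCal (key ▸ hCl), key]
      rw [← hσ, Equiv.Perm.inv_apply_self, hu, mk_cons, mk_single_false]

/-- The finite-index subgroup: the stabilizer of the base point. -/
def D : Subgroup F where
  carrier := {g | T.φ g (bp (H := H)) = bp}
  one_mem' := by simp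
  mul_mem' := by
    intro a b ha hb
    show T.φ (a * b) bp = bp
    rw [_root_.map_mul]
    show T.φ a (T.φ b bp) = bp
    rw [hb, ha]
  inv_mem' := by
    intro a ha
    show T.φ a⁻¹ bp = bp
    rw [_root_.map_inv]
    replace ha : T.φ a bp = bp := ha
    conv_lhs => rw [← ha]
    exact Equiv.Perm.inv_apply_self _ _

theorem mem_D {g : F} : g ∈ T.D ↔ T.φ g (bp (H := H)) = bp := Iff.rfl

theorem S_subset_D : T.S ⊆ T.D := by
  intro s hs
  rw [SetLike.mem_coe, mem_D]
  have : s = FreeGroup.mk s.toWord := (FreeGroup.mk_toWord).symm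
  rw [this, T.path _ (fun l' hl' => T.hSC s hs l' hl')]
  rw [← this]
  rw [coe_eq_bp]
  rw [← T.hS]
  exact Subgroup.subset_closure hs

theorem H_le_D : H ≤ T.D := by
  have : Subgroup.closure T.S ≤ T.D := (Subgroup.closure_le _).2 T.S_subset_D
  rwa [T.hS] at this


open scoped Classical

/-- Edges of the core graph. -/
def E : Type _ := {v : Q // v ∈ T.C} × Fin n

noncomputable def letter (v : Q) (x : Fin n) : FreeGroup T.E :=
  if h : v ∈ T.C then FreeGroup.of (α := T.E) (⟨v, h⟩, x) else 1

/-- The permutation of `Q × FreeGroup E` recording traversed edges. -/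
noncomputable def τ (x : Fin n) : Equiv.Perm (Q × FreeGroup T.E) where
  toFun p := (T.σ x p.1, T.letter p.1 x * p.2)
  invFun p := ((T.σ x)⁻¹ p.1, (T.letter ((T.σ x)⁻¹ p.1) x)⁻¹ * p.2)
  left_inv p := by
    obtain ⟨v, w⟩ := p
    simp
  right_inv p := by
    obtain ⟨v, w⟩ := p
    simp

noncomputable def Θ : F →* Equiv.Perm (Q × FreeGroup T.E) := FreeGroup.lift fun x => T.τ x

noncomputable def ψ (v : Q) (g : F) : FreeGroup T.E := (T.Θ g (v, 1)).2

theorem Θ_apply (g : F) (v : Q) (w : FreeGroup T.E) :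
    T.Θ g (v, w) = (T.φ g v, T.ψ v g * w) := by
  induction g using FreeGroup.induction_on generalizing v w with
  | C1 =>
    have h1 : T.Θ 1 (v, w) = (v, w) := by rw [_root_.map_one]; rfl
    have h2 : T.ψ v 1 = 1 := by
      show (T.Θ 1 (v, (1 : FreeGroup T.E))).2 = 1
      rw [_root_.map_one]; rfl
    rw [h1, h2, _root_.map_one, one_mul]; rfl
  | of x =>
    have h1 : T.Θ (of x) = T.τ x := FreeGroup.lift_apply_of
    have h2 : T.ψ v (of x) = T.letter v x := by
      show (T.Θ (of x) (v, 1)).2 = _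
      rw [h1]; show T.letter v x * 1 = _; rw [mul_one]
    rw [h1, h2, φ_of]; rfl
  | inv_of x _ =>
    have h0 : T.Θ (of x) = T.τ x := FreeGroup.lift_apply_of
    have h1 : T.Θ (of x)⁻¹ = (T.τ x)⁻¹ := by rw [_root_.map_inv, h0]
    have h2 : T.ψ v (of x)⁻¹ = (T.letter ((T.σ x)⁻¹ v) x)⁻¹ := by
      show (T.Θ (of x)⁻¹ (v, 1)).2 = _
      rw [h1]; show (T.letter ((T.σ x)⁻¹ v) x)⁻¹ * 1 = _; rw [mul_one]
    have h3 : T.φ (of x)⁻¹ v = (T.σ x)⁻¹ v := by rw [_root_.map_inv, φ_of]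
    rw [h1, h2, h3]; rfl
  | mul g h ihg ihh =>
    have hψ : T.ψ v (g * h) = T.ψ (T.φ h v) g * T.ψ v h := by
      show (T.Θ (g * h) (v, 1)).2 = _
      rw [_root_.map_mul, Equiv.Perm.mul_apply, ihh v 1, ihg (T.φ h v) (T.ψ v h * 1)]
      rw [mul_one]
    rw [_root_.map_mul, Equiv.Perm.mul_apply, ihh v w, ihg (T.φ h v) (T.ψ v h * w), hψ,
      _root_.map_mul, Equiv.Perm.mul_apply, mul_assoc]

theorem ψ_mul (g h : F) (v : Q) : T.ψ v (g * h) = T.ψ (T.φ h v) g * T.ψ v h := by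
  show (T.Θ (g * h) (v, 1)).2 = _
  rw [_root_.map_mul, Equiv.Perm.mul_apply, T.Θ_apply h v 1, T.Θ_apply g (T.φ h v) (T.ψ v h * 1)]
  rw [mul_one]

theorem ψ_one (v : Q) : T.ψ v 1 = 1 := by
  show (T.Θ 1 (v, (1 : FreeGroup T.E))).2 = 1
  rw [_root_.map_one]; rfl

theorem ψ_of {v : Q} (h : v ∈ T.C) (x : Fin n) :
    T.ψ v (of x) = FreeGroup.of (α := T.E) (⟨v, h⟩, x) := by
  show (T.Θ (of x) (v, 1)).2 = _
  rw [Θ, FreeGroup.lift_apply_of]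
  show T.letter v x * 1 = _
  rw [mul_one, letter, dif_pos h]

theorem ψ_of_inv (v : Q) (x : Fin n) :
    T.ψ v (of x)⁻¹ = (T.letter ((T.σ x)⁻¹ v) x)⁻¹ := by
  show (T.Θ (of x)⁻¹ (v, 1)).2 = _
  rw [_root_.map_inv, Θ, FreeGroup.lift_apply_of]
  show (T.letter ((T.σ x)⁻¹ v) x)⁻¹ * 1 = _
  rw [mul_one]

theorem ψ_inv (g : F) (v : Q) : T.ψ v g⁻¹ = (T.ψ (T.φ g⁻¹ v) g)⁻¹ := by
  have h1 : T.ψ (T.φ g⁻¹ v) g * T.ψ v g⁻¹ = 1 := by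
    rw [← T.ψ_mul g g⁻¹ v, mul_inv_cancel, T.ψ_one]
  exact (inv_eq_of_mul_eq_one_right h1).symm

/-- A "genuine" edge: one coming from honest coset multiplication inside the core. -/
def gen (e : T.E) : Prop := FreeGroup.of e.2 • (e.1 : Q) ∈ T.C

/-- Subgroup of `FreeGroup E` generated by genuine edges. -/
def K₁ : Subgroup (FreeGroup T.E) := Subgroup.closure (FreeGroup.of '' {e : T.E | T.gen e})

theorem ψ_good (l : List (Fin n × Bool)) (hl : T.Good l) :
    T.ψ (bp (H := H)) (FreeGroup.mk l) ∈ T.K₁ := by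
  induction l with
  | nil =>
    rw [show (FreeGroup.mk [] : F) = 1 from FreeGroup.one_eq_mk.symm, T.ψ_one]
    exact one_mem _
  | cons a l ih =>
    obtain ⟨x, b⟩ := a
    have hCl : ((FreeGroup.mk l : F) : Q) ∈ T.C := hl l (List.suffix_cons _ l)
    have hCal : ((FreeGroup.mk ((x, b) :: l) : F) : Q) ∈ T.C := hl _ List.suffix_rfl
    have hpath : T.φ (FreeGroup.mk l) (bp (H := H)) = ((FreeGroup.mk l : F) : Q) :=
      T.path l hl.tail
    rw [mk_cons, T.ψ_mul, hpath]
    refine mul_mem ?_ (ih hl.tail)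
    cases b with
    | true =>
      rw [mk_single_true, T.ψ_of hCl]
      refine Subgroup.subset_closure ⟨(⟨_, hCl⟩, x), ?_, rfl⟩
      show FreeGroup.of x • ((FreeGroup.mk l : F) : Q) ∈ T.C
      have : FreeGroup.of x • ((FreeGroup.mk l : F) : Q)
          = ((FreeGroup.mk ((x, true) :: l) : F) : Q) := by
        rw [mk_cons, mk_single_true]; rfl
      rw [this]; exact hCal
    | false =>
      rw [mk_single_false, T.ψ_of_inv]
      set u : Q := ((FreeGroup.mk ((x, false) :: l) : F) : Q) with hu
      have key : FreeGroup.of x • u = ((FreeGroup.mk l : F) : Q) := by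
        rw [hu, mk_cons, mk_single_false]
        show ((FreeGroup.of x * ((of x)⁻¹ * FreeGroup.mk l) : F) : Q) = _
        rw [mul_inv_cancel_left]
      have hσ : T.σ x u = ((FreeGroup.mk l : F) : Q) := by
        rw [T.hagree x u hCal (key ▸ hCl), key]
      have hinv : (T.σ x)⁻¹ ((FreeGroup.mk l : F) : Q) = u := by
        rw [← hσ, Equiv.Perm.inv_apply_self]
      rw [hinv, letter, dif_pos hCal]
      refine inv_mem (Subgroup.subset_closure ⟨(⟨u, hCal⟩, x), ?_, rfl⟩)
      show FreeGroup.of x • u ∈ T.C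
      rw [key]; exact hCl

/-- The property required of the chosen "transversal word" for a vertex. -/
def P (v : Q) (g : F) : Prop :=
  T.φ g (bp (H := H)) = v ∧ (g : Q) = v ∧ T.ψ (bp (H := H)) g ∈ T.K₁

theorem exists_P {v : Q} (hv : v ∈ T.C) : ∃ g : F, T.P v g := by
  obtain ⟨l, hgood, hcoe⟩ := T.hreach v hv
  exact ⟨FreeGroup.mk l, by rw [T.path l hgood, hcoe], hcoe, T.ψ_good l hgood⟩

theorem P_one : T.P (bp (H := H)) 1 :=
  ⟨by rw [_root_.map_one]; rfl, rfl, by rw [T.ψ_one]; exact one_mem _⟩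

noncomputable def t (v : Q) : F :=
  if v = bp (H := H) then 1 else if h : ∃ g : F, T.P v g then h.choose else 1

theorem t_bp : T.t (bp (H := H)) = 1 := if_pos rfl

theorem t_spec {v : Q} (hv : v ∈ T.C) : T.P v (T.t v) := by
  unfold t
  split_ifs with h1 h2
  · rw [h1]; exact T.P_one
  · exact h2.choose_spec
  · exact absurd (T.exists_P hv) h2

/-- The basis elements attached to edges. -/
noncomputable def γ (e : T.E) : F := (T.t (T.φ (of e.2) ↑e.1))⁻¹ * of e.2 * T.t ↑e.1

theorem u_mem (e : T.E) : T.φ (of e.2) ↑e.1 ∈ T.C := by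
  rw [φ_of]; exact T.hstab _ _ e.1.2

theorem γ_mem_D (e : T.E) : T.γ e ∈ T.D := by
  obtain ⟨⟨v, hv⟩, x⟩ := e
  have h1 : T.φ (T.t v) (bp (H := H)) = v := (T.t_spec hv).1
  have hum : T.φ (of x) v ∈ T.C := by rw [φ_of]; exact T.hstab x v hv
  have h2 : T.φ (T.t (T.φ (of x) v)) (bp (H := H)) = T.φ (of x) v := (T.t_spec hum).1
  rw [mem_D]; unfold γ
  rw [_root_.map_mul, _root_.map_mul, _root_.map_inv]
  show (T.φ (T.t (T.φ (of x) v)))⁻¹ (T.φ (of x) (T.φ (T.t v) bp)) = bp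
  rw [h1]
  have h3 := Equiv.Perm.inv_apply_self (T.φ (T.t (T.φ (of x) v))) (bp (H := H))
  rw [h2] at h3
  exact h3

theorem γ_mem_H {e : T.E} (he : T.gen e) : T.γ e ∈ H := by
  obtain ⟨⟨v, hv⟩, x⟩ := e
  have he' : FreeGroup.of x • v ∈ T.C := he
  have hu : T.φ (of x) v = FreeGroup.of x • v := by
    rw [φ_of]; exact T.hagree x v hv he'
  have h1 : ((T.t v : F) : Q) = v := (T.t_spec hv).2.1
  have h2 : ((T.t (FreeGroup.of x • v) : F) : Q) = FreeGroup.of x • v := (T.t_spec he').2.1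
  rw [← coe_eq_bp, ← smul_bp]; unfold γ
  show ((T.t (T.φ (of x) v))⁻¹ * of x * T.t v) • (bp (H := H)) = bp
  rw [hu, mul_smul, mul_smul, smul_bp, h1]
  have h3 : (T.t (FreeGroup.of x • v))⁻¹ • T.t (FreeGroup.of x • v) • (bp (H := H)) = bp :=
    inv_smul_smul _ _
  rwa [smul_bp, h2] at h3

noncomputable def Φ : FreeGroup T.E →* F := FreeGroup.lift T.γ

theorem Φ_ψ (g : F) : ∀ v, v ∈ T.C → T.Φ (T.ψ v g) = (T.t (T.φ g v))⁻¹ * g * T.t v := by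
  induction g using FreeGroup.induction_on with
  | C1 =>
    intro v hv
    rw [T.ψ_one, _root_.map_one, _root_.map_one]
    show (1 : F) = (T.t v)⁻¹ * 1 * T.t v
    group
  | of x =>
    intro v hv
    rw [T.ψ_of hv, Φ]; exact FreeGroup.lift_apply_of
  | inv_of x _ =>
    intro v hv
    rw [T.ψ_of_inv, _root_.map_inv]
    have hu : ((T.σ x)⁻¹ v) ∈ T.C := T.σ_inv_mem hv
    rw [letter, dif_pos hu, Φ]; erw [FreeGroup.lift_apply_of]; unfold γ
    have h3 : T.φ (of x)⁻¹ v = (T.σ x)⁻¹ v := by rw [_root_.map_inv, φ_of]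
    have h4 : T.φ (of x) ((T.σ x)⁻¹ v) = v := by
      rw [φ_of]; exact Equiv.Perm.apply_inv_self _ _
    rw [h3]
    show ((T.t (T.φ (of x) ((⟨(T.σ x)⁻¹ v, hu⟩ : {v : Q // v ∈ T.C}) : Q)))⁻¹ * of x *
      T.t ((T.σ x)⁻¹ v))⁻¹ = _
    show ((T.t (T.φ (of x) ((T.σ x)⁻¹ v)))⁻¹ * of x * T.t ((T.σ x)⁻¹ v))⁻¹ = _
    rw [h4]
    group
  | mul g h ihg ihh =>
    intro v hv
    rw [T.ψ_mul, _root_.map_mul, ihg _ (T.Cstable h v hv), ihh v hv]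
    have : T.φ (g * h) v = T.φ g (T.φ h v) := by rw [_root_.map_mul]; rfl
    rw [this]
    group

theorem bp_mem : (bp (H := H)) ∈ T.C := T.hone

theorem Φ_ψ_bp {g : F} (hg : g ∈ T.D) : T.Φ (T.ψ (bp (H := H)) g) = g := by
  rw [T.Φ_ψ g _ T.bp_mem, (mem_D T).1 hg, t_bp]
  group

/-- The complementary free factor: generated by the non-genuine edges. -/
noncomputable def L : Subgroup F := Subgroup.closure (T.γ '' {e : T.E | ¬ T.gen e})

theorem L_le_D : T.L ≤ T.D :=
  (Subgroup.closure_le _).2 (by rintro _ ⟨e, _, rfl⟩; exact T.γ_mem_D e)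

theorem φ_inv_bp {a : F} (ha : T.φ a (bp (H := H)) = bp) : T.φ a⁻¹ (bp (H := H)) = bp := by
  rw [_root_.map_inv]
  have := Equiv.Perm.inv_apply_self (T.φ a) (bp (H := H))
  rwa [ha] at this

/-- The subgroup of elements of `D` whose ψ-record consists of genuine edges. -/
def M : Subgroup F where
  carrier := {g | T.φ g (bp (H := H)) = bp ∧ T.ψ (bp (H := H)) g ∈ T.K₁}
  one_mem' := ⟨by rw [_root_.map_one]; rfl, by rw [T.ψ_one]; exact one_mem _⟩
  mul_mem' := by
    rintro a b ⟨ha1, ha2⟩ ⟨hb1, hb2⟩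
    refine ⟨?_, ?_⟩
    · show T.φ (a * b) bp = bp
      rw [_root_.map_mul]
      show T.φ a (T.φ b bp) = bp
      rw [hb1, ha1]
    · show T.ψ bp (a * b) ∈ T.K₁
      rw [T.ψ_mul, hb1]
      exact mul_mem ha2 hb2
  inv_mem' := by
    rintro a ⟨ha1, ha2⟩
    refine ⟨T.φ_inv_bp ha1, ?_⟩
    show T.ψ bp a⁻¹ ∈ T.K₁
    rw [T.ψ_inv, T.φ_inv_bp ha1]
    exact inv_mem ha2

theorem H_le_M : H ≤ T.M := by
  have : Subgroup.closure T.S ≤ T.M := by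
    rw [Subgroup.closure_le]
    intro s hs
    have hD : T.φ s (bp (H := H)) = bp := T.S_subset_D hs
    refine ⟨hD, ?_⟩
    have hmk : s = FreeGroup.mk s.toWord := FreeGroup.mk_toWord.symm
    rw [hmk]
    exact T.ψ_good _ (fun l' hl' => T.hSC s hs l' hl')
  rwa [T.hS] at this

noncomputable def χ : FreeGroup T.E →* Monoid.Coprod H T.L :=
  FreeGroup.lift fun e =>
    if h : T.gen e then Monoid.Coprod.inl (⟨T.γ e, T.γ_mem_H h⟩ : H)
    else Monoid.Coprod.inr (⟨T.γ e, Subgroup.subset_closure ⟨e, h, rfl⟩⟩ : T.L)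

noncomputable def Λ : Monoid.Coprod H T.L →* F := Monoid.Coprod.lift H.subtype T.L.subtype

theorem Λ_χ : T.Λ.comp T.χ = T.Φ := by
  apply FreeGroup.ext_hom
  intro e
  show T.Λ (T.χ (FreeGroup.of e)) = T.Φ (FreeGroup.of e)
  rw [χ, FreeGroup.lift_apply_of, Φ, FreeGroup.lift_apply_of]
  by_cases h : T.gen e
  · rw [dif_pos h, Λ, Monoid.Coprod.lift_apply_inl]; rfl
  · rw [dif_neg h, Λ, Monoid.Coprod.lift_apply_inr]; rfl

theorem Λ_χ_apply (w : FreeGroup T.E) : T.Λ (T.χ w) = T.Φ w := DFunLike.congr_fun T.Λ_χ w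

theorem χ_K₁ {w : FreeGroup T.E} (hw : w ∈ T.K₁) :
    ∃ a : H, T.χ w = Monoid.Coprod.inl a ∧ (a : F) = T.Φ w := by
  have hrange : T.χ w ∈ (Monoid.Coprod.inl : H →* Monoid.Coprod H T.L).range := by
    have hle : T.K₁ ≤ Subgroup.comap T.χ
        (Monoid.Coprod.inl : H →* Monoid.Coprod H T.L).range := by
      rw [K₁, Subgroup.closure_le]
      rintro _ ⟨e, he, rfl⟩
      have he' : T.gen e := he
      simp only [SetLike.mem_coe, Subgroup.mem_comap]
      rw [χ, FreeGroup.lift_apply_of, dif_pos he']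
      exact ⟨_, rfl⟩
    exact hle hw
  obtain ⟨a, ha⟩ := hrange
  refine ⟨a, ha.symm, ?_⟩
  have h2 : T.Λ (Monoid.Coprod.inl a) = T.Λ (T.χ w) := congrArg T.Λ ha
  rw [T.Λ_χ_apply w] at h2
  rw [← h2, Λ, Monoid.Coprod.lift_apply_inl]
  rfl

theorem χ_ψ_H {h : F} (hh : h ∈ H) :
    T.χ (T.ψ (bp (H := H)) h) = Monoid.Coprod.inl (⟨h, hh⟩ : H) := by
  obtain ⟨hD, hK⟩ := T.H_le_M hh
  obtain ⟨a, ha, ha2⟩ := T.χ_K₁ hK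
  have hΦ : (a : F) = h := by rw [ha2]; exact T.Φ_ψ_bp hD
  rw [ha]
  exact congrArg _ (Subtype.ext hΦ)

theorem χ_ψ_t {v : Q} (hv : v ∈ T.C) : T.χ (T.ψ (bp (H := H)) (T.t v)) = 1 := by
  obtain ⟨a, ha, ha2⟩ := T.χ_K₁ (T.t_spec hv).2.2
  have hΦ : T.Φ (T.ψ (bp (H := H)) (T.t v)) = 1 := by
    rw [T.Φ_ψ _ _ T.bp_mem, (T.t_spec hv).1, t_bp, mul_one, inv_mul_cancel]
  have ha1 : (a : F) = 1 := by rw [ha2, hΦ]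
  have : a = 1 := Subtype.ext (by rw [ha1]; rfl)
  rw [ha, this, _root_.map_one]

theorem χ_ψ_γ {e : T.E} (he : ¬ T.gen e) :
    T.χ (T.ψ (bp (H := H)) (T.γ e)) =
      Monoid.Coprod.inr (⟨T.γ e, Subgroup.subset_closure ⟨e, he, rfl⟩⟩ : T.L) := by
  obtain ⟨⟨v, hv⟩, x⟩ := e
  have hum : T.φ (of x) v ∈ T.C := by rw [φ_of]; exact T.hstab x v hv
  have htv : T.φ (T.t v) (bp (H := H)) = v := (T.t_spec hv).1
  have htu : T.φ (T.t (T.φ (of x) v)) (bp (H := H)) = T.φ (of x) v := (T.t_spec hum).1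
  have hstep3 : T.ψ (T.φ (of x) v) (T.t (T.φ (of x) v))⁻¹
      = (T.ψ (bp (H := H)) (T.t (T.φ (of x) v)))⁻¹ := by
    rw [T.ψ_inv]
    have h5 : T.φ (T.t (T.φ (of x) v))⁻¹ (T.φ (of x) v) = bp := by
      rw [_root_.map_inv]
      have h6 := Equiv.Perm.inv_apply_self (T.φ (T.t (T.φ (of x) v))) (bp (H := H))
      rwa [htu] at h6
    rw [h5]
  have hγsplit : T.γ ((⟨v, hv⟩, x) : T.E)
      = ((T.t (T.φ (of x) v))⁻¹ * of x) * T.t v := rfl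
  conv_lhs => rw [hγsplit]
  rw [T.ψ_mul, htv, T.ψ_mul, hstep3, T.ψ_of hv]
  rw [_root_.map_mul, _root_.map_mul, _root_.map_inv]
  rw [T.χ_ψ_t hum, T.χ_ψ_t hv, inv_one, one_mul, mul_one]
  rw [χ]; erw [FreeGroup.lift_apply_of]; rw [dif_neg he]

theorem χ_ψ_L {g : F} (hg : g ∈ T.L) :
    T.χ (T.ψ (bp (H := H)) g) = Monoid.Coprod.inr (⟨g, hg⟩ : T.L) := by
  have hg' : g ∈ Subgroup.closure (T.γ '' {e : T.E | ¬ T.gen e}) := hg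
  show T.χ (T.ψ (bp (H := H)) g) = Monoid.Coprod.inr (⟨g, hg'⟩ : T.L)
  clear hg
  induction hg' using Subgroup.closure_induction with
  | mem w hw =>
    obtain ⟨e, he, rfl⟩ := hw
    exact T.χ_ψ_γ he
  | one =>
    rw [T.ψ_one, _root_.map_one]
    have h1 : (⟨(1 : F), one_mem T.L⟩ : T.L) = 1 := rfl
    rw [h1, _root_.map_one]
  | mul a b ha hb iha ihb =>
    have hbD : T.φ b (bp (H := H)) = bp := T.L_le_D hb
    rw [T.ψ_mul, hbD, _root_.map_mul, iha, ihb, ← _root_.map_mul]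
    rfl
  | inv a ha iha =>
    have haD : T.φ a (bp (H := H)) = bp := T.L_le_D ha
    rw [T.ψ_inv, T.φ_inv_bp haD, _root_.map_inv, iha, ← _root_.map_inv]
    rfl

theorem Λ_mem_D (z : Monoid.Coprod H T.L) : T.Λ z ∈ T.D := by
  have hr : T.Λ.range = H ⊔ T.L := by
    rw [Λ, Monoid.Coprod.range_lift, Subgroup.range_subtype, Subgroup.range_subtype]
  have hz : T.Λ z ∈ H ⊔ T.L := hr ▸ ⟨z, rfl⟩
  exact (sup_le T.H_le_D T.L_le_D) hz

noncomputable def Λhat : Monoid.Coprod H T.L →* T.D := T.Λ.codRestrict T.D T.Λ_mem_D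

noncomputable def ρ : T.D →* FreeGroup T.E where
  toFun d := T.ψ (bp (H := H)) ↑d
  map_one' := by
    show T.ψ (bp (H := H)) ((1 : T.D) : F) = 1
    rw [OneMemClass.coe_one, T.ψ_one]
  map_mul' := by
    intro a b
    show T.ψ bp ((a : F) * (b : F)) = _
    rw [T.ψ_mul, (mem_D T).1 b.2]

noncomputable def θ : T.D →* Monoid.Coprod H T.L := T.χ.comp T.ρ

theorem θ_Λhat : T.θ.comp T.Λhat = MonoidHom.id _ := by
  apply Monoid.Coprod.hom_ext
  · ext h
    show T.χ (T.ρ (T.Λhat (Monoid.Coprod.inl h))) = Monoid.Coprod.inl h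
    have h1 : (T.Λhat (Monoid.Coprod.inl h) : F) = (h : F) := by
      show T.Λ (Monoid.Coprod.inl h) = (h : F)
      rw [Λ, Monoid.Coprod.lift_apply_inl]
      rfl
    show T.χ (T.ψ (bp (H := H)) ↑(T.Λhat (Monoid.Coprod.inl h))) = Monoid.Coprod.inl h
    rw [h1, T.χ_ψ_H h.2]
  · ext l
    show T.χ (T.ρ (T.Λhat (Monoid.Coprod.inr l))) = Monoid.Coprod.inr l
    have h1 : (T.Λhat (Monoid.Coprod.inr l) : F) = (l : F) := by
      show T.Λ (Monoid.Coprod.inr l) = (l : F)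
      rw [Λ, Monoid.Coprod.lift_apply_inr]
      rfl
    show T.χ (T.ψ (bp (H := H)) ↑(T.Λhat (Monoid.Coprod.inr l))) = Monoid.Coprod.inr l
    rw [h1, T.χ_ψ_L l.2]

theorem injective_Λ : Function.Injective T.Λ := by
  have hleft : Function.LeftInverse T.θ T.Λhat := fun z => DFunLike.congr_fun T.θ_Λhat z
  have hinj : Function.Injective T.Λhat := hleft.injective
  have hcomp : T.Λ = (T.D.subtype).comp T.Λhat := rfl
  rw [hcomp]
  exact (Subgroup.subtype_injective _).comp hinj

theorem range_Λ : T.Λ.range = T.D := by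
  apply le_antisymm
  · rintro _ ⟨z, rfl⟩
    exact T.Λ_mem_D z
  · intro g hg
    exact ⟨T.χ (T.ψ (bp (H := H)) g), by rw [T.Λ_χ_apply, T.Φ_ψ_bp hg]⟩

theorem index_D : T.D.index ≠ 0 := by
  haveI : Finite {v : Q // v ∈ T.C} := T.hfin.to_subtype
  let f : F ⧸ T.D → {v : Q // v ∈ T.C} :=
    Quotient.lift (fun g => (⟨T.φ g (bp (H := H)), T.Cstable g _ T.bp_mem⟩ : {v : Q // v ∈ T.C}))
      (by
        intro a b hab
        have hab2 : a⁻¹ * b ∈ T.D := QuotientGroup.leftRel_apply.mp hab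
        replace hab : T.φ (a⁻¹ * b) (bp (H := H)) = bp := hab2
        apply Subtype.ext
        show T.φ a (bp (H := H)) = T.φ b (bp (H := H))
        have hb : b = a * (a⁻¹ * b) := by group
        rw [hb, _root_.map_mul, Equiv.Perm.mul_apply, hab])
  have hfinj : Function.Injective f := by
    intro q1 q2
    refine Quotient.inductionOn₂ q1 q2 ?_
    intro a b hab
    have hab' : T.φ a (bp (H := H)) = T.φ b (bp (H := H)) := congrArg Subtype.val hab
    apply Quotient.sound
    refine QuotientGroup.leftRel_apply.mpr ?_
    show T.φ (a⁻¹ * b) (bp (H := H)) = bp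
    rw [_root_.map_mul, Equiv.Perm.mul_apply, ← hab']
    rw [_root_.map_inv]
    exact Equiv.Perm.inv_apply_self _ _
  haveI : Finite (F ⧸ T.D) := Finite.of_injective f hfinj
  exact Subgroup.index_ne_zero_of_finite

theorem conclusion :
    Function.Injective (Monoid.Coprod.lift H.subtype T.L.subtype) ∧
      (Monoid.Coprod.lift H.subtype T.L.subtype).range = T.D :=
  ⟨T.injective_Λ, T.range_Λ⟩

end Setup

end HallAux

/-- M. Hall's theorem: every finitely generated subgroup `H` of a free group of finite
rank is a free factor of some subgroup `D` of finite index: `D = H * L` internally,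
i.e. the natural map from the coproduct `H ∗ L` to `F` is injective with range `D`. -/
theorem stmt10 (n : ℕ) (H : Subgroup (FreeGroup (Fin n))) (hH : H.FG) :
    ∃ (D L : Subgroup (FreeGroup (Fin n))), D.index ≠ 0 ∧ H ≤ D ∧ L ≤ D ∧
      Function.Injective (Monoid.Coprod.lift H.subtype L.subtype) ∧
      (Monoid.Coprod.lift H.subtype L.subtype).range = D := by
  classical
  obtain ⟨S, hSclos, hSfin⟩ := (Subgroup.fg_iff H).mp hH
  set v0 : FreeGroup (Fin n) ⧸ H := ((1 : FreeGroup (Fin n)) : FreeGroup (Fin n) ⧸ H) with hv0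
  set Cs : Set (FreeGroup (Fin n) ⧸ H) :=
    {v0} ∪ ⋃ s ∈ S, ⋃ l ∈ s.toWord.tails,
      ({((FreeGroup.mk l : FreeGroup (Fin n)) : FreeGroup (Fin n) ⧸ H)} :
        Set (FreeGroup (Fin n) ⧸ H)) with hCs
  have hfin : Cs.Finite := by
    refine (Set.finite_singleton _).union ?_
    refine Set.Finite.biUnion hSfin fun s _ => ?_
    exact Set.Finite.biUnion (s.toWord.tails.finite_toSet) fun l _ => Set.finite_singleton _
  have hmemC : ∀ s ∈ S, ∀ l, l <:+ s.toWord →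
      ((FreeGroup.mk l : FreeGroup (Fin n)) : FreeGroup (Fin n) ⧸ H) ∈ Cs := by
    intro s hs l hl
    rw [hCs]
    refine Set.mem_union_right _ ?_
    simp only [Set.mem_iUnion, Set.mem_singleton_iff]
    exact ⟨s, hs, l, (List.mem_tails _ _).mpr hl, rfl⟩
  have honemem : v0 ∈ Cs := by rw [hCs]; exact Set.mem_union_left _ rfl
  have hσ : ∀ x : Fin n, ∃ σ : Equiv.Perm (FreeGroup (Fin n) ⧸ H),
      (∀ v ∈ Cs, (FreeGroup.of x) • v ∈ Cs → σ v = FreeGroup.of x • v) ∧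
      (∀ v ∈ Cs, σ v ∈ Cs) ∧ (∀ v ∉ Cs, σ v = v) := fun x =>
    exists_perm_extend_s10 Cs hfin (fun v => FreeGroup.of x • v) (MulAction.injective _)
  choose σf hσ1 hσ2 hσ3 using hσ
  have hreach : ∀ v ∈ Cs, ∃ l : List (Fin n × Bool),
      (∀ l', l' <:+ l →
        ((FreeGroup.mk l' : FreeGroup (Fin n)) : FreeGroup (Fin n) ⧸ H) ∈ Cs) ∧
      ((FreeGroup.mk l : FreeGroup (Fin n)) : FreeGroup (Fin n) ⧸ H) = v := by
    intro v hv
    rw [hCs] at hv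
    rcases hv with hv | hv
    · refine ⟨[], ?_, ?_⟩
      · intro l' hl'
        rw [List.suffix_nil.mp hl']
        rw [show (FreeGroup.mk [] : FreeGroup (Fin n)) = 1 from FreeGroup.one_eq_mk.symm]
        exact honemem
      · rw [show (FreeGroup.mk [] : FreeGroup (Fin n)) = 1 from FreeGroup.one_eq_mk.symm]
        exact hv.symm ▸ rfl
    · simp only [Set.mem_iUnion, Set.mem_singleton_iff] at hv
      obtain ⟨s, hs, l, hl, rfl⟩ := hv
      have hlsuf : l <:+ s.toWord := (List.mem_tails _ _).mp hl
      exact ⟨l, fun l' hl' => hmemC s hs l' (hl'.trans hlsuf), rfl⟩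
  let T : HallAux.Setup n H :=
  { C := Cs
    hfin := hfin
    hone := honemem
    σ := σf
    hagree := fun x v hv hxv => hσ1 x v hv hxv
    hstab := fun x v hv => hσ2 x v hv
    hfix := fun x v hv => hσ3 x v hv
    S := S
    hS := hSclos
    hSC := fun s hs l hl => hmemC s hs l hl
    hreach := hreach }
  exact ⟨T.D, T.L, T.index_D, T.H_le_D, T.L_le_D, T.conclusion.1, T.conclusion.2⟩
end

section
/- Let G be a group, F a normal subgroup of finite index, H a subgroup, and x ∈ G. Suppose H < x⁻¹Hx (strict containment). Then the chain (H ∩ F) ≤ x⁻¹(H ∩ F)x ≤ x⁻²(H ∩ F)x² ≤ ... is also strictly ascending, i.e., for every n, x⁻ⁿ(H∩F)xⁿ < x⁻⁽ⁿ⁺¹⁾(H∩F)x⁽ⁿ⁺¹⁾. -/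
/-- The conjugate subgroup `A^g = g⁻¹ A g`. -/
def conjSub {G : Type*} [Group G] (g : G) (A : Subgroup G) : Subgroup G :=
  Subgroup.map (MulAut.conj g⁻¹).toMonoidHom A

lemma conjSub_lt {G : Type*} [Group G] (g : G) {A B : Subgroup G} (h : A < B) :
    conjSub g A < conjSub g B := by
  unfold conjSub
  constructor
  · exact Subgroup.map_mono h.le
  · intro hle
    apply h.not_ge
    intro b hb
    have hmem : (MulAut.conj g⁻¹) b ∈ Subgroup.map (MulAut.conj g⁻¹).toMonoidHom B :=
      ⟨b, hb, rfl⟩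
    obtain ⟨a, ha, hab⟩ := hle hmem
    have : a = b := (MulAut.conj g⁻¹).injective hab
    exact this ▸ ha

lemma conjSub_one {G : Type*} [Group G] (A : Subgroup G) : conjSub 1 A = A := by
  unfold conjSub
  ext y
  simp

lemma conjSub_conjSub {G : Type*} [Group G] (a b : G) (A : Subgroup G) :
    conjSub b (conjSub a A) = conjSub (a * b) A := by
  unfold conjSub
  rw [Subgroup.map_map]
  congr 1
  ext y
  simp [mul_assoc]

lemma conjSub_inf {G : Type*} [Group G] (g : G) (A B : Subgroup G) :
    conjSub g (A ⊓ B) = conjSub g A ⊓ conjSub g B := by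
  unfold conjSub
  exact Subgroup.map_inf A B _ (MulAut.conj g⁻¹).injective

lemma conjSub_normal {G : Type*} [Group G] (g : G) {F : Subgroup G} (hF : F.Normal) :
    conjSub g F = F := by
  ext y
  constructor
  · rintro ⟨a, ha, rfl⟩
    exact hF.conj_mem a ha g⁻¹
  · intro hy
    refine ⟨g * y * g⁻¹, hF.conj_mem y hy g, ?_⟩
    simp [mul_assoc]

lemma relindex_conjSub {G : Type*} [Group G] (g : G) {F : Subgroup G} (hF : F.Normal)
    (H : Subgroup G) : F.relIndex (conjSub g H) = F.relIndex H := by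
  unfold conjSub
  rw [← Subgroup.relIndex_comap]
  congr 1
  ext y
  simp only [Subgroup.mem_comap, MulEquiv.coe_toMonoidHom, MulAut.conj_apply, inv_inv]
  constructor
  · intro hy
    have := hF.conj_mem _ hy g
    simpa [mul_assoc] using this
  · intro hy
    simpa using hF.conj_mem y hy g⁻¹

lemma inf_lt_inf_of_relindex {G : Type*} [Group G] {A B F : Subgroup G} (hAB : A < B)
    (hrel : F.relIndex A = F.relIndex B) (hFB : F.relIndex B ≠ 0) :
    A ⊓ F < B ⊓ F := by
  refine lt_of_le_of_ne (inf_le_inf_right F hAB.le) ?_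
  intro heq
  have h1 : (A ⊓ F).relIndex A = F.relIndex A := by
    rw [inf_comm, Subgroup.inf_relIndex_right]
  have h2 : (B ⊓ F).relIndex B = F.relIndex B := by
    rw [inf_comm, Subgroup.inf_relIndex_right]
  have hmul : (A ⊓ F).relIndex A * A.relIndex B = (A ⊓ F).relIndex B :=
    Subgroup.relIndex_mul_relIndex _ _ _ inf_le_left hAB.le
  have hmul' : (A ⊓ F).relIndex A * A.relIndex B = (A ⊓ F).relIndex A * 1 := by
    rw [hmul, mul_one]
    conv_lhs => rw [heq]
    rw [h2, ← hrel, ← h1]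
  have hne : 0 < (A ⊓ F).relIndex A := by
    rw [h1, hrel]; exact Nat.pos_of_ne_zero hFB
  have : A.relIndex B = 1 := Nat.eq_of_mul_eq_mul_left hne hmul'
  exact hAB.not_ge (Subgroup.relIndex_eq_one.mp this)

theorem stmt14 {G : Type*} [Group G] (F : Subgroup G) (hFnorm : F.Normal)
    (hFind : F.index ≠ 0) (H : Subgroup G) (x : G)
    (h : H < conjSub x H) :
    ∀ n : ℕ, conjSub (x ^ n) (H ⊓ F) < conjSub (x ^ (n + 1)) (H ⊓ F) := by
  intro n
  have hAB : ∀ m : ℕ, conjSub (x ^ m) H < conjSub (x ^ (m + 1)) H := by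
    intro m
    induction m with
    | zero => simpa [conjSub_one, pow_zero, pow_one] using h
    | succ k ih =>
      have := conjSub_lt x ih
      rw [conjSub_conjSub, conjSub_conjSub, ← pow_succ, ← pow_succ] at this
      exact this
  rw [conjSub_inf, conjSub_inf, conjSub_normal _ hFnorm, conjSub_normal _ hFnorm]
  apply inf_lt_inf_of_relindex (hAB n)
  · rw [relindex_conjSub _ hFnorm, relindex_conjSub _ hFnorm]
  · intro h0
    have : (F.relIndex (conjSub (x ^ (n + 1)) H)) ∣ F.index :=
      @Subgroup.relIndex_dvd_index_of_normal G _ F _ hFnorm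
    rw [h0] at this
    exact hFind (Nat.eq_zero_of_zero_dvd this)
end

section
/- For any natural numbers r, s ≥ 2 and t ≥ 1, there exists a finite connected bipartite graph with vertex parts V₁, V₂ such that every vertex of V₁ has degree r, every vertex of V₂ has degree s, and the graph contains no cycle of length less than t. -/
set_option linter.unusedSectionVars false
set_option maxHeartbeats 1000000

namespace Stmt17

section Raw

variable {α β : Type} [AddGroup α] [AddGroup β] [DecidableEq α]

/-- `Good x`: the entry is a nonzero element of its side. -/
def Good : α ⊕ β → Prop := Sum.elim (· ≠ 0) (· ≠ 0)

/-- alternating sides -/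
def Alt : α ⊕ β → α ⊕ β → Prop := fun x y => x.isLeft ≠ y.isLeft

/-- reduced word -/
def Ok (l : List (α ⊕ β)) : Prop := (∀ x ∈ l, Good x) ∧ l.Chain' Alt

variable (t : ℕ)

/-- raw left action of `a : α` on truncated reduced words -/
def raw (a : α) : List (α ⊕ β) → List (α ⊕ β)
  | Sum.inl c :: u => if a + c = 0 then u else Sum.inl (a + c) :: u
  | l => if a = 0 ∨ t ≤ l.length then l else Sum.inl a :: l

lemma raw_inl (a c : α) (u : List (α ⊕ β)) :
    raw t a (Sum.inl c :: u) = if a + c = 0 then u else Sum.inl (a + c) :: u := rfl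

lemma raw_nil (a : α) :
    raw t a ([] : List (α ⊕ β)) = if a = 0 ∨ t ≤ 0 then [] else [Sum.inl a] := rfl

lemma raw_inr (a : α) (c : β) (u : List (α ⊕ β)) :
    raw t a (Sum.inr c :: u) =
      if a = 0 ∨ t ≤ (Sum.inr c :: u).length then Sum.inr c :: u
      else Sum.inl a :: Sum.inr c :: u := rfl

lemma raw_zero (l : List (α ⊕ β)) (h : Ok l) : raw t 0 l = l := by
  match l with
  | [] => simp [raw_nil]
  | Sum.inl c :: u =>
      have hc : c ≠ 0 := h.1 (Sum.inl c) (by simp)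
      simp [raw_inl, hc]
  | Sum.inr c :: u => simp [raw_inr]

lemma raw_ok (a : α) (l : List (α ⊕ β)) (h : Ok l) (hl : l.length ≤ t) :
    Ok (raw t a l) ∧ (raw t a l).length ≤ t := by
  match l with
  | [] =>
      rw [raw_nil]
      split
      · exact ⟨h, hl⟩
      · rename_i hcond
        push_neg at hcond
        refine ⟨⟨?_, ?_⟩, ?_⟩
        · intro x hx; simp at hx; subst hx; exact hcond.1
        · simp [List.Chain', List.isChain_singleton]
        · simp; omega
  | Sum.inl c :: u =>
      rw [raw_inl]
      split
      · refine ⟨⟨fun x hx => h.1 x (by simp [hx]), h.2.tail⟩, ?_⟩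
        simp at hl; omega
      · rename_i hne
        refine ⟨⟨?_, ?_⟩, by simpa using hl⟩
        · intro x hx
          rcases List.mem_cons.1 hx with hx | hx
          · subst hx; exact hne
          · exact h.1 x (by simp [hx])
        · rcases u with _ | ⟨y, v⟩
          · simp [List.Chain', List.isChain_singleton]
          · refine List.IsChain.cons_cons ?_ h.2.tail
            have := List.isChain_cons_cons.1 h.2
            exact this.1
  | Sum.inr c :: u =>
      rw [raw_inr]
      split
      · exact ⟨h, hl⟩
      · rename_i hcond
        push_neg at hcond
        refine ⟨⟨?_, ?_⟩, by simp at hcond ⊢; omega⟩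
        · intro x hx
          rcases List.mem_cons.1 hx with hx | hx
          · subst hx; exact hcond.1
          · exact h.1 x hx
        · exact List.isChain_cons_cons.2 ⟨by simp [Alt], h.2⟩

lemma raw_add (a a' : α) (l : List (α ⊕ β)) (h : Ok l) (hl : l.length ≤ t) :
    raw t a (raw t a' l) = raw t (a + a') l := by
  match l with
  | [] =>
      rw [raw_nil]
      by_cases h0 : t = 0
      · subst h0; simp [raw_nil]
      · have h0' : ¬ (t ≤ 0) := by omega
        simp only [h0', or_false]
        by_cases ha' : a' = 0
        · simp [ha', raw_nil, h0', add_zero]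
        · rw [if_neg ha', raw_inl, raw_nil]
          by_cases ha : a + a' = 0
          · rw [if_pos ha, if_pos (Or.inl ha)]
          · rw [if_neg ha, if_neg (by push_neg; exact ⟨ha, by omega⟩)]
  | Sum.inl c :: u =>
      have hut : u.length < t := by simp at hl; omega
      have hoku : Ok u := ⟨fun x hx => h.1 x (List.mem_cons_of_mem _ hx), h.2.tail⟩
      by_cases h1 : a' + c = 0
      · rw [raw_inl t a' c u, if_pos h1, raw_inl t (a+a') c u]
        have hadd : a + a' + c = a := by rw [add_assoc, h1, add_zero]
        by_cases ha : a = 0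
        · rw [if_pos (by rw [hadd]; exact ha), ha, raw_zero t u hoku]
        · rw [if_neg (by rw [hadd]; exact ha), hadd]
          rcases u with _ | ⟨y, v⟩
          · rw [raw_nil, if_neg (by push_neg; exact ⟨ha, by omega⟩)]
          · rcases y with y | y
            · exfalso; have := (List.isChain_cons_cons.1 h.2).1; simp [Alt] at this
            · rw [raw_inr, if_neg (by push_neg; refine ⟨ha, ?_⟩; simp at hut ⊢; omega)]
      · rw [raw_inl t a' c u, if_neg h1, raw_inl t a (a' + c) u, raw_inl t (a+a') c u,
          add_assoc]
  | Sum.inr c :: u =>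
      rw [raw_inr]
      by_cases hcond : a' = 0 ∨ t ≤ (Sum.inr c :: u).length
      · rw [if_pos hcond, raw_inr, raw_inr]
        rcases hcond with h0 | hlen
        · subst h0; rw [add_zero]
        · simp only [hlen, or_true, if_true]
      · rw [if_neg hcond]
        push_neg at hcond
        have hlen : ¬ t ≤ (Sum.inr c :: u).length := by omega
        rw [raw_inl, raw_inr]
        by_cases ha : a + a' = 0
        · rw [if_pos ha, if_pos (Or.inl ha)]
        · rw [if_neg ha, if_neg (by push_neg; exact ⟨ha, by omega⟩)]

end Raw

section XLevel

variable {α β : Type} [AddGroup α] [AddGroup β] [DecidableEq α] [DecidableEq β]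

/-- truncated reduced words -/
abbrev X (α β : Type) [AddGroup α] [AddGroup β] (t : ℕ) :=
  {l : List (α ⊕ β) // Ok l ∧ l.length ≤ t}

variable (t : ℕ)

lemma ok_nil : Ok ([] : List (α ⊕ β)) := ⟨by simp, by simp [List.Chain']⟩

def εX : X α β t := ⟨[], ok_nil, by simp⟩

def permL (a : α) : Equiv.Perm (X α β t) where
  toFun x := ⟨raw t a x.1, (raw_ok t a x.1 x.2.1 x.2.2).1, (raw_ok t a x.1 x.2.1 x.2.2).2⟩
  invFun x := ⟨raw t (-a) x.1, (raw_ok t (-a) x.1 x.2.1 x.2.2).1, (raw_ok t (-a) x.1 x.2.1 x.2.2).2⟩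
  left_inv x := Subtype.ext (by
    have h1 := (raw_ok t a x.1 x.2.1 x.2.2)
    simp only
    rw [raw_add t (-a) a x.1 x.2.1 x.2.2, neg_add_cancel, raw_zero t x.1 x.2.1])
  right_inv x := Subtype.ext (by
    have h1 := (raw_ok t (-a) x.1 x.2.1 x.2.2)
    simp only
    rw [raw_add t a (-a) x.1 x.2.1 x.2.2, add_neg_cancel, raw_zero t x.1 x.2.1])

@[simp] lemma permL_apply (a : α) (x : X α β t) : (permL t a x).1 = raw t a x.1 := rfl

lemma permL_mul (a a' : α) : permL t a * permL t a' = (permL t (a + a') : Equiv.Perm (X α β t)) :=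
  Equiv.ext fun x => Subtype.ext (by
    simp only [Equiv.Perm.mul_apply, permL_apply]
    exact raw_add t a a' x.1 x.2.1 x.2.2)

lemma permL_zero : permL t (0 : α) = (1 : Equiv.Perm (X α β t)) :=
  Equiv.ext fun x => Subtype.ext (by
    simp only [permL_apply, Equiv.Perm.one_apply]
    exact raw_zero t x.1 x.2.1)

lemma ok_map_swap {l : List (α ⊕ β)} (h : Ok l) : Ok (l.map Sum.swap) := by
  constructor
  · intro x hx
    rcases List.mem_map.1 hx with ⟨y, hy, rfl⟩
    rcases y with c | c <;> simpa [Good, Sum.swap] using h.1 _ hy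
  · simp only [List.Chain']
    rw [List.isChain_map]
    refine h.2.imp ?_
    rintro (c | c) (d | d) hcd <;> simp_all [Alt, Sum.swap]

def swapX : X α β t ≃ X β α t where
  toFun x := ⟨x.1.map Sum.swap, ok_map_swap x.2.1, by simpa using x.2.2⟩
  invFun x := ⟨x.1.map Sum.swap, ok_map_swap x.2.1, by simpa using x.2.2⟩
  left_inv x := Subtype.ext (by simp [List.map_map, Sum.swap_swap_eq])
  right_inv x := Subtype.ext (by simp [List.map_map, Sum.swap_swap_eq])

def permR (b : β) : Equiv.Perm (X α β t) :=
  (swapX t).trans ((permL t b).trans (swapX t).symm)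

@[simp] lemma permR_apply (b : β) (x : X α β t) :
    (permR t b x).1 = (raw t b (x.1.map Sum.swap)).map Sum.swap := rfl

lemma permR_mul (b b' : β) : permR t b * permR t b' = (permR t (b + b') : Equiv.Perm (X α β t)) := by
  apply Equiv.ext; intro x
  rw [Equiv.Perm.mul_apply]
  simp only [permR, Equiv.trans_apply, Equiv.apply_symm_apply]
  rw [← permL_mul, Equiv.Perm.mul_apply]

lemma permR_zero : permR t (0 : β) = (1 : Equiv.Perm (X α β t)) := by
  apply Equiv.ext; intro x
  simp only [permR, Equiv.trans_apply, permL_zero, Equiv.Perm.one_apply]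
  simp

/-- prepending a fresh left letter -/
lemma raw_fresh (a : α) (l : List (α ⊕ β)) (ha : a ≠ 0) (hl : l.length < t)
    (hhd : l = [] ∨ ∃ c u, l = Sum.inr c :: u) :
    raw t a l = Sum.inl a :: l := by
  rcases hhd with rfl | ⟨c, u, rfl⟩
  · rw [raw_nil, if_neg (by push_neg; exact ⟨ha, by omega⟩)]
  · rw [raw_inr, if_neg (by push_neg; exact ⟨ha, by omega⟩)]

lemma permL_fresh (a : α) (x : X α β t) (ha : a ≠ 0) (hl : x.1.length < t)
    (hhd : x.1 = [] ∨ ∃ c u, x.1 = Sum.inr c :: u) :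
    (permL t a x).1 = Sum.inl a :: x.1 := by
  rw [permL_apply, raw_fresh t a x.1 ha hl hhd]

lemma permR_fresh (b : β) (x : X α β t) (hb : b ≠ 0) (hl : x.1.length < t)
    (hhd : x.1 = [] ∨ ∃ c u, x.1 = Sum.inl c :: u) :
    (permR t b x).1 = Sum.inr b :: x.1 := by
  rw [permR_apply, raw_fresh t b (x.1.map Sum.swap) hb (by simpa using hl) ?_]
  · simp [List.map_map, Sum.swap_swap_eq]
  · rcases hhd with h | ⟨c, u, h⟩ <;> rw [h]
    · left; simp
    · right; exact ⟨c, u.map Sum.swap, by simp⟩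

lemma permL_eq_permR {a : α} {b : β} (ht : 0 < t)
    (h : permL t a = (permR t b : Equiv.Perm (X α β t))) : a = 0 ∧ b = 0 := by
  have hε := congrArg (fun p : Equiv.Perm (X α β t) => (p (εX t)).1) h
  simp only [permL_apply, permR_apply] at hε
  have hεv : (εX t : X α β t).1 = [] := rfl
  rw [hεv] at hε
  simp only [List.map_nil] at hε
  rw [raw_nil, raw_nil] at hε
  by_cases ha : a = 0
  · refine ⟨ha, ?_⟩
    by_cases hb : b = 0
    · exact hb
    · rw [if_pos (Or.inl ha), if_neg (by push_neg; exact ⟨hb, by omega⟩)] at hε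
      simp at hε
  · rw [if_neg (by push_neg; exact ⟨ha, by omega⟩)] at hε
    by_cases hb : b = 0
    · rw [if_pos (Or.inl hb)] at hε; simp at hε
    · rw [if_neg (by push_neg; exact ⟨hb, by omega⟩)] at hε
      simp [Sum.swap] at hε

lemma permL_injective (ht : 0 < t) : Function.Injective (permL (α := α) (β := β) t) := by
  intro a a' h
  have hε := congrArg (fun p : Equiv.Perm (X α β t) => (p (εX t)).1) h
  simp only [permL_apply] at hε
  have hεv : (εX t : X α β t).1 = [] := rfl
  rw [hεv, raw_nil, raw_nil] at hε
  by_cases ha : a = 0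
  · by_cases ha' : a' = 0
    · rw [ha, ha']
    · rw [if_pos (Or.inl ha), if_neg (by push_neg; exact ⟨ha', by omega⟩)] at hε
      simp at hε
  · rw [if_neg (by push_neg; exact ⟨ha, by omega⟩)] at hε
    by_cases ha' : a' = 0
    · rw [if_pos (Or.inl ha')] at hε; simp at hε
    · rw [if_neg (by push_neg; exact ⟨ha', by omega⟩)] at hε
      simpa using hε

lemma permR_injective (ht : 0 < t) : Function.Injective (permR (α := α) (β := β) t) := by
  intro b b' h
  apply permL_injective (α := β) (β := α) t ht
  apply Equiv.ext; intro y
  have hy := congrArg (fun p : Equiv.Perm (X α β t) => p ((swapX t).symm y)) h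
  simp only [permR, Equiv.trans_apply, Equiv.apply_symm_apply] at hy
  exact (Equiv.injective _) hy

end XLevel

section Grp

variable (α β : Type) [AddGroup α] [AddGroup β] [DecidableEq α] [DecidableEq β] (t : ℕ)

def gens : Set (Equiv.Perm (X α β t)) := Set.range (permL t) ∪ Set.range (permR t)

def Hgrp : Subgroup (Equiv.Perm (X α β t)) := Subgroup.closure (gens α β t)

def φH (a : α) : ↥(Hgrp α β t) :=
  ⟨permL t a, Subgroup.subset_closure (Or.inl ⟨a, rfl⟩)⟩

def ψH (b : β) : ↥(Hgrp α β t) :=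
  ⟨permR t b, Subgroup.subset_closure (Or.inr ⟨b, rfl⟩)⟩

lemma φH_mul (a a' : α) : φH α β t a * φH α β t a' = φH α β t (a + a') :=
  Subtype.ext (permL_mul t a a')

lemma φH_zero : φH α β t 0 = 1 := Subtype.ext (permL_zero t)

lemma φH_inv (a : α) : (φH α β t a)⁻¹ = φH α β t (-a) :=
  (eq_inv_of_mul_eq_one_left (by rw [φH_mul, neg_add_cancel, φH_zero])).symm

lemma ψH_mul (b b' : β) : ψH α β t b * ψH α β t b' = ψH α β t (b + b') :=
  Subtype.ext (permR_mul t b b')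

lemma ψH_zero : ψH α β t 0 = 1 := Subtype.ext (permR_zero t)

lemma ψH_inv (b : β) : (ψH α β t b)⁻¹ = ψH α β t (-b) :=
  (eq_inv_of_mul_eq_one_left (by rw [ψH_mul, neg_add_cancel, ψH_zero])).symm

def Asub : Subgroup ↥(Hgrp α β t) where
  carrier := Set.range (φH α β t)
  one_mem' := ⟨0, φH_zero α β t⟩
  mul_mem' := by rintro _ _ ⟨a, rfl⟩ ⟨a', rfl⟩; exact ⟨a + a', (φH_mul α β t a a').symm⟩
  inv_mem' := by rintro _ ⟨a, rfl⟩; exact ⟨-a, (φH_inv α β t a).symm⟩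

def Bsub : Subgroup ↥(Hgrp α β t) where
  carrier := Set.range (ψH α β t)
  one_mem' := ⟨0, ψH_zero α β t⟩
  mul_mem' := by rintro _ _ ⟨b, rfl⟩ ⟨b', rfl⟩; exact ⟨b + b', (ψH_mul α β t b b').symm⟩
  inv_mem' := by rintro _ ⟨b, rfl⟩; exact ⟨-b, (ψH_inv α β t b).symm⟩

abbrev V1 := ↥(Hgrp α β t) ⧸ Asub α β t

abbrev V2 := ↥(Hgrp α β t) ⧸ Bsub α β t

instance : Group ↥(Hgrp α β t) := inferInstance

def mkA : ↥(Hgrp α β t) → V1 α β t := QuotientGroup.mk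

def mkB : ↥(Hgrp α β t) → V2 α β t := QuotientGroup.mk

def Rel (u : V1 α β t) (v : V2 α β t) : Prop :=
  ∃ (x : ↥(Hgrp α β t)) (a : α), u = mkA α β t x ∧ v = mkB α β t (x * φH α β t a)

def Gr : SimpleGraph (V1 α β t ⊕ V2 α β t) where
  Adj p q := match p, q with
    | .inl u, .inr v => Rel α β t u v
    | .inr v, .inl u => Rel α β t u v
    | .inl _, .inl _ => False
    | .inr _, .inr _ => False
  symm := ⟨by rintro (u|u) (v|v) h <;> exact h⟩
  loopless := ⟨by rintro (u|u) h <;> exact h⟩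

lemma adj_inl_inr {u v} : (Gr α β t).Adj (.inl u) (.inr v) ↔ Rel α β t u v := Iff.rfl

lemma adj_inr_inl {u v} : (Gr α β t).Adj (.inr v) (.inl u) ↔ Rel α β t u v := Iff.rfl

lemma not_adj_inl_inl (u u') : ¬ (Gr α β t).Adj (.inl u) (.inl u') := fun h => h

lemma not_adj_inr_inr (v v') : ¬ (Gr α β t).Adj (.inr v) (.inr v') := fun h => h

lemma rel_mk (x : ↥(Hgrp α β t)) (a : α) :
    Rel α β t (mkA α β t x) (mkB α β t (x * φH α β t a)) := ⟨x, a, rfl, rfl⟩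

lemma rel_self (x : ↥(Hgrp α β t)) : Rel α β t (mkA α β t x) (mkB α β t x) :=
  ⟨x, 0, rfl, by rw [φH_zero, mul_one]⟩

lemma rel_smul (g : ↥(Hgrp α β t)) {u : V1 α β t} {v : V2 α β t} :
    Rel α β t (g • u) (g • v) ↔ Rel α β t u v := by
  constructor
  · rintro ⟨x, a, h1, h2⟩
    refine ⟨g⁻¹ * x, a, ?_, ?_⟩
    · have : u = g⁻¹ • (g • u) := by rw [inv_smul_smul]
      rw [this, h1, mkA]
      rw [MulAction.Quotient.smul_mk, smul_eq_mul]
    · have : v = g⁻¹ • (g • v) := by rw [inv_smul_smul]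
      rw [this, h2, mkB]
      rw [MulAction.Quotient.smul_mk, smul_eq_mul, mul_assoc]
  · rintro ⟨x, a, rfl, rfl⟩
    refine ⟨g * x, a, ?_, ?_⟩
    · rw [mkA, MulAction.Quotient.smul_mk, smul_eq_mul]
    · rw [mkB, MulAction.Quotient.smul_mk, smul_eq_mul, mul_assoc]

/-- left translation as a graph isomorphism -/
def shiftIso (g : ↥(Hgrp α β t)) : Gr α β t ≃g Gr α β t where
  toEquiv := Equiv.sumCongr (MulAction.toPerm g) (MulAction.toPerm g)
  map_rel_iff' := by
    rintro (u|u) (v|v) <;>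
      simp only [Equiv.sumCongr_apply, Sum.map_inl, Sum.map_inr]
    · exact Iff.rfl
    · exact rel_smul α β t g
    · exact rel_smul α β t g
    · exact Iff.rfl

end Grp

section Words

variable (α β : Type) [AddGroup α] [AddGroup β] [DecidableEq α] [DecidableEq β] (t : ℕ)

/-- product of the group elements of a word (deepest letter first in the list,
applied first to points). -/
def πH : List (α ⊕ β) → ↥(Hgrp α β t)
  | [] => 1
  | Sum.inl a :: u => πH u * φH α β t a
  | Sum.inr b :: u => πH u * ψH α β t b

@[simp] lemma πH_nil : πH α β t [] = 1 := rfl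

lemma πH_inl (a : α) (u) : πH α β t (Sum.inl a :: u) = πH α β t u * φH α β t a := rfl

lemma πH_inr (b : β) (u) : πH α β t (Sum.inr b :: u) = πH α β t u * ψH α β t b := rfl

lemma coe_mul_apply (g h : ↥(Hgrp α β t)) (x : X α β t) :
    ((g * h : ↥(Hgrp α β t)) : Equiv.Perm (X α β t)) x = (g : Equiv.Perm (X α β t)) ((h : Equiv.Perm (X α β t)) x) := rfl

lemma ok_suffix {l l' : List (α ⊕ β)} (h : Ok l) (hs : l' <:+ l) : Ok l' :=
  ⟨fun x hx => h.1 x (hs.subset hx), h.2.suffix hs⟩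

/-- evaluation of a word product on a compatible point -/
lemma πH_eval : ∀ (w : List (α ⊕ β)) (x : X α β t),
    Ok (w.reverse ++ x.1) → w.length + x.1.length ≤ t →
    (((πH α β t w : ↥(Hgrp α β t)) : Equiv.Perm (X α β t)) x).1 = w.reverse ++ x.1 := by
  intro w
  induction w with
  | nil => intro x _ _; simp
  | cons σ u ih =>
      intro x hok hlen
      have hrev : (σ :: u).reverse ++ x.1 = u.reverse ++ (σ :: x.1) := by
        simp [List.append_assoc]
      rw [hrev] at hok
      have hsuf : (σ :: x.1) <:+ (u.reverse ++ (σ :: x.1)) := List.suffix_append _ _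
      have hok' : Ok (σ :: x.1) := ok_suffix α β hok hsuf
      have hgood : Good σ := hok'.1 σ (by simp)
      have hxlen : x.1.length < t := by
        have := hlen; simp at this; omega
      have hhd : ∀ (hl : Sum.isLeft σ = true), x.1 = [] ∨ ∃ c v, x.1 = Sum.inr c :: v := by
        intro hl
        rcases hx : x.1 with _ | ⟨c | c, v⟩
        · exact Or.inl rfl
        · exfalso
          have := List.isChain_cons_cons.1 (hx ▸ hok'.2)
          rcases σ with a | b
          · simp [Alt] at this
          · simp at hl
        · exact Or.inr ⟨c, v, rfl⟩
      have hhd' : ∀ (hl : Sum.isLeft σ = false), x.1 = [] ∨ ∃ c v, x.1 = Sum.inl c :: v := by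
        intro hl
        rcases hx : x.1 with _ | ⟨c | c, v⟩
        · exact Or.inl rfl
        · exact Or.inr ⟨c, v, rfl⟩
        · exfalso
          have := List.isChain_cons_cons.1 (hx ▸ hok'.2)
          rcases σ with a | b
          · simp at hl
          · simp [Alt] at this
      rcases σ with a | b
      · have ha : a ≠ 0 := hgood
        have hfresh := permL_fresh t a x ha hxlen (hhd rfl)
        rw [πH_inl, coe_mul_apply]
        have hxval : ((φH α β t a : ↥(Hgrp α β t)) : Equiv.Perm (X α β t)) x = (⟨Sum.inl a :: x.1, hok', by simp; omega⟩ : X α β t) := by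
          apply Subtype.ext
          exact hfresh
        rw [hxval]
        rw [ih ⟨Sum.inl a :: x.1, hok', by simp; omega⟩ (by simpa using hok) (by simp at hlen ⊢; omega)]
        exact hrev.symm
      · have hb : b ≠ 0 := hgood
        have hfresh := permR_fresh t b x hb hxlen (hhd' rfl)
        rw [πH_inr, coe_mul_apply]
        have hxval : ((ψH α β t b : ↥(Hgrp α β t)) : Equiv.Perm (X α β t)) x = (⟨Sum.inr b :: x.1, hok', by simp; omega⟩ : X α β t) := by
          apply Subtype.ext
          exact hfresh
        rw [hxval]
        rw [ih ⟨Sum.inr b :: x.1, hok', by simp; omega⟩ (by simpa using hok) (by simp at hlen ⊢; omega)]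
        exact hrev.symm

def vtxA (w : List (α ⊕ β)) : V1 α β t := mkA α β t (πH α β t w)

def vtxB (w : List (α ⊕ β)) : V2 α β t := mkB α β t (πH α β t w)

def rootA : V1 α β t ⊕ V2 α β t := .inl (vtxA α β t [])

/-- the geodesic chain of vertices from a word down to the root -/
def chain : Bool → List (α ⊕ β) → List (V1 α β t ⊕ V2 α β t)
  | true, [] => [.inl (vtxA α β t [])]
  | true, σ :: u => .inl (vtxA α β t (σ :: u)) :: chain false u
  | false, [] => [.inr (vtxB α β t []), .inl (vtxA α β t [])]
  | false, σ :: u => .inr (vtxB α β t (σ :: u)) :: chain true u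

lemma mem_chain_self_A (w) : (.inl (vtxA α β t w) : V1 α β t ⊕ V2 α β t) ∈ chain α β t true w := by
  cases w <;> simp [chain]

lemma mem_chain_self_B (w) : (.inr (vtxB α β t w) : V1 α β t ⊕ V2 α β t) ∈ chain α β t false w := by
  cases w <;> simp [chain]

lemma chain_length_le : ∀ (b : Bool) (w : List (α ⊕ β)), w.length + 1 ≤ (chain α β t b w).length
  | true, [] => by simp [chain]
  | true, σ :: u => by
      have := chain_length_le false u
      simp [chain] at this ⊢; omega
  | false, [] => by simp [chain]
  | false, σ :: u => by
      have := chain_length_le true u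
      simp [chain] at this ⊢; omega

end Words

section Key

variable (α β : Type) [AddGroup α] [AddGroup β] [DecidableEq α] [DecidableEq β] (t : ℕ)

def headInr (w : List (α ⊕ β)) : Prop := w = [] ∨ ∃ c u, w = Sum.inr c :: u

def headInl (w : List (α ⊕ β)) : Prop := w = [] ∨ ∃ c u, w = Sum.inl c :: u

lemma mkA_eq_iff {x y : ↥(Hgrp α β t)} :
    mkA α β t x = mkA α β t y ↔ ∃ a, y = x * φH α β t a := by
  constructor
  · intro h
    rcases (QuotientGroup.eq.1 h : x⁻¹ * y ∈ Asub α β t) with ⟨a, ha⟩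
    exact ⟨a, by rw [ha, mul_inv_cancel_left]⟩
  · rintro ⟨a, rfl⟩
    exact (QuotientGroup.eq).2 ⟨a, by rw [inv_mul_cancel_left]⟩

lemma mkB_eq_iff {x y : ↥(Hgrp α β t)} :
    mkB α β t x = mkB α β t y ↔ ∃ b, y = x * ψH α β t b := by
  constructor
  · intro h
    rcases (QuotientGroup.eq.1 h : x⁻¹ * y ∈ Bsub α β t) with ⟨b, hb⟩
    exact ⟨b, by rw [hb, mul_inv_cancel_left]⟩
  · rintro ⟨b, rfl⟩
    exact (QuotientGroup.eq).2 ⟨b, by rw [inv_mul_cancel_left]⟩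

lemma key : ∀ {v z : V1 α β t ⊕ V2 α β t} (p : (Gr α β t).Walk v z),
    z = rootA α β t → p.IsPath →
    ∃ w : List (α ⊕ β), Ok w ∧ w.length ≤ p.length ∧
      ((∃ u, v = .inl u ∧ headInr α β w ∧ u = vtxA α β t w ∧ p.support = chain α β t true w) ∨
       (∃ u, v = .inr u ∧ headInl α β w ∧ u = vtxB α β t w ∧ p.support = chain α β t false w)) := by
  intro v z p
  induction p with
  | nil =>
      rintro rfl _
      exact ⟨[], ok_nil, by simp,
        Or.inl ⟨vtxA α β t [], rfl, Or.inl rfl, rfl, rfl⟩⟩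
  | @cons vv vm vz h q ih =>
      rintro rfl hp
      obtain ⟨hq, hnot⟩ := (SimpleGraph.Walk.cons_isPath_iff h q).1 hp
      obtain ⟨w', hOk', hlen', hcase⟩ := ih rfl hq
      rcases vv with u | u <;> rcases vm with u2 | u2
      · exact absurd h (not_adj_inl_inl α β t u u2)
      · -- current vertex in part A, previous (closer to root) in part B
        rcases hcase with ⟨u3, hu3, _, _, _⟩ | ⟨u3, hu3, hhead, hvb, hsup⟩
        · exact absurd hu3 (by simp)
        · have hu23 : u2 = u3 := by simpa using hu3
          subst hu23
          obtain ⟨x, a, hu, hub⟩ := (adj_inl_inr α β t).1 h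
          have hBeq : mkB α β t (x * φH α β t a) = mkB α β t (πH α β t w') := by
            rw [← hub, hvb]; rfl
          obtain ⟨b, hb⟩ := (mkB_eq_iff α β t).1 hBeq
          -- πH w' = x * φH a * ψH b
          have hxw : πH α β t w' * ψH α β t (-b) = x * φH α β t a := by
            rw [hb, mul_assoc, ψH_mul, add_neg_cancel, ψH_zero, mul_one]
          have humk : u = mkA α β t (πH α β t w' * ψH α β t (-b)) := by
            rw [hxw, hu]
            exact (mkA_eq_iff α β t).2 ⟨a, rfl⟩
          by_cases hbz : b = 0
          · -- degenerate step towards the root: contradiction with being a path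
            exfalso
            have humk' : u = mkA α β t (πH α β t w') := by
              rw [humk, hbz, neg_zero, ψH_zero, mul_one]
            rcases hhead with rfl | ⟨c, u₃, rfl⟩
            · -- w' = [], so current vertex is the root, but the root is q's end
              apply hnot
              have : u = vtxA α β t [] := humk'
              rw [this]
              exact q.end_mem_support
            · -- w' = inl c :: u₃ : current vertex is the parent, lies in q
              apply hnot
              have hpar : u = vtxA α β t u₃ := by
                rw [humk', πH_inl]
                exact (mkA_eq_iff α β t).2
                  ⟨-c, by rw [mul_assoc, φH_mul, add_neg_cancel, φH_zero, mul_one]⟩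
              rw [hpar, hsup]
              exact List.mem_cons_of_mem _ (mem_chain_self_A α β t u₃)
          · -- proper step: the word grows
            refine ⟨Sum.inr (-b) :: w', ?_, by simp; omega,
              Or.inl ⟨u, rfl, Or.inr ⟨-b, w', rfl⟩, ?_, ?_⟩⟩
            · refine ⟨?_, ?_⟩
              · intro y hy
                rcases List.mem_cons.1 hy with rfl | hy
                · exact neg_ne_zero.2 hbz
                · exact hOk'.1 y hy
              · rcases hhead with rfl | ⟨c, u₃, rfl⟩
                · simp [List.Chain']
                · exact List.isChain_cons_cons.2 ⟨by simp [Alt], hOk'.2⟩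
            · rw [humk]; rfl
            · rw [SimpleGraph.Walk.support_cons, hsup]
              have : u = vtxA α β t (Sum.inr (-b) :: w') := by rw [humk]; rfl
              rw [this]
              rfl
      · -- current vertex in part B, previous in part A
        rcases hcase with ⟨u3, hu3, hhead, hva, hsup⟩ | ⟨u3, hu3, _, _, _⟩
        · have hu23 : u2 = u3 := by simpa using hu3
          subst hu23
          obtain ⟨x, a, hu2, hub⟩ := (adj_inr_inl α β t).1 h
          have hAeq : mkA α β t x = mkA α β t (πH α β t w') := by
            rw [← hu2, hva]; rfl
          obtain ⟨c, hc⟩ := (mkA_eq_iff α β t).1 hAeq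
          -- πH w' = x * φH c, so x = πH w' * φH (-c)
          have hx : x = πH α β t w' * φH α β t (-c) := by
            rw [hc, mul_assoc, φH_mul, add_neg_cancel, φH_zero, mul_one]
          have humk : u = mkB α β t (πH α β t w' * φH α β t (-c + a)) := by
            rw [hub, hx, mul_assoc, φH_mul]
          by_cases hdz : -c + a = 0
          · -- degenerate step towards the root
            have humk' : u = mkB α β t (πH α β t w') := by
              rw [humk, hdz, φH_zero, mul_one]
            rcases hhead with rfl | ⟨e, u₃, rfl⟩
            · -- w' = [] : mid vertex is the root itself, hence q is nil
              subst hva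
              have hq0 : q = SimpleGraph.Walk.nil := (SimpleGraph.Walk.isPath_iff_eq_nil (p := q)).1 hq
              refine ⟨[], ok_nil, by simp, Or.inr ⟨u, rfl, Or.inl rfl, humk', ?_⟩⟩
              rw [SimpleGraph.Walk.support_cons, hq0, humk']
              rfl
            · exfalso
              apply hnot
              have hpar : u = vtxB α β t u₃ := by
                rw [humk', πH_inr]
                exact (mkB_eq_iff α β t).2
                  ⟨-e, by rw [mul_assoc, ψH_mul, add_neg_cancel, ψH_zero, mul_one]⟩
              rw [hpar, hsup]
              exact List.mem_cons_of_mem _ (mem_chain_self_B α β t u₃)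
          · -- proper step: the word grows
            refine ⟨Sum.inl (-c + a) :: w', ?_, by simp; omega,
              Or.inr ⟨u, rfl, Or.inr ⟨-c + a, w', rfl⟩, ?_, ?_⟩⟩
            · refine ⟨?_, ?_⟩
              · intro y hy
                rcases List.mem_cons.1 hy with rfl | hy
                · exact hdz
                · exact hOk'.1 y hy
              · rcases hhead with rfl | ⟨e, u₃, rfl⟩
                · simp [List.Chain']
                · exact List.isChain_cons_cons.2 ⟨by simp [Alt], hOk'.2⟩
            · rw [humk]; rfl
            · rw [SimpleGraph.Walk.support_cons, hsup]
              have hvw : u = vtxB α β t (Sum.inl (-c + a) :: w') := by rw [humk]; rfl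
              rw [hvw]
              rfl
        · exact absurd hu3 (by simp)
      · exact absurd h (not_adj_inr_inr α β t u2 u)

end Key

section Girth

variable (α β : Type) [AddGroup α] [AddGroup β] [DecidableEq α] [DecidableEq β] (t : ℕ)

lemma ok_reverse {w : List (α ⊕ β)} (h : Ok w) : Ok w.reverse := by
  refine ⟨fun x hx => h.1 x (List.mem_reverse.1 hx), ?_⟩
  simp only [List.Chain']
  rw [List.isChain_reverse]
  exact h.2.imp fun _ _ hxy => Ne.symm hxy

lemma no_short_cycle_root (ht : 0 < t)
    (c : (Gr α β t).Walk (rootA α β t) (rootA α β t)) (hc : c.IsCycle) :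
    ¬ (c.length ≤ t) := by
  intro hle
  have h3 := hc.three_le_length
  cases c with
  | nil => exact SimpleGraph.Walk.IsCycle.not_of_nil hc
  | @cons _ vm _ h q =>
      have hq : q.IsPath := by
        apply SimpleGraph.Walk.IsPath.mk'
        have := hc.2
        rwa [SimpleGraph.Walk.support_cons] at this
      obtain ⟨w', hOk', hwlen, hcase⟩ := key α β t q rfl hq
      rcases vm with u2 | u2
      · exact not_adj_inl_inl α β t _ _ h
      · obtain ⟨x, a, hroot, hu2⟩ := (adj_inl_inr α β t).1 h
        have h1x : mkA α β t 1 = mkA α β t x := hroot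
        obtain ⟨d, hd⟩ := (mkA_eq_iff α β t).1 h1x
        rcases hcase with ⟨u3, h3', _, _, _⟩ | ⟨u3, h3', hhead, hvb, hsup⟩
        · exact absurd h3' (by simp)
        · have hu23 : u2 = u3 := by simpa using h3'
          subst hu23
          have hBeq : mkB α β t (x * φH α β t a) = mkB α β t (πH α β t w') := by
            rw [← hu2, hvb]; rfl
          obtain ⟨b, hb⟩ := (mkB_eq_iff α β t).1 hBeq
          have hπ : πH α β t w' = φH α β t (d + a) * ψH α β t b := by
            rw [hb, hd, one_mul, φH_mul]
          -- evaluate both sides on the empty word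
          have hlenw : w'.length ≤ t := by
            have hql : q.length + 1 ≤ t := by
              simpa [SimpleGraph.Walk.length_cons] using hle
            omega
          have hεnil0 : (εX t : X α β t).1 = [] := rfl
          have heval := πH_eval α β t w' (εX t)
            (by rw [hεnil0, List.append_nil]; exact ok_reverse α β hOk')
            (by rw [hεnil0]; simpa using hlenw)
          have hcast := congrArg
            (fun (g : ↥(Hgrp α β t)) => (((g : ↥(Hgrp α β t)) : Equiv.Perm (X α β t)) (εX t)).1) hπ
          rw [heval] at hcast
          rw [coe_mul_apply] at hcast
          -- compute the right hand side
          have hψval : ((ψH α β t b : ↥(Hgrp α β t)) : Equiv.Perm (X α β t)) (εX t)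
              = permR t b (εX t) := rfl
          have hw : w'.reverse ++ (εX t).1 =
              raw t (d + a) ((permR t b (εX t)).1) := by
            rw [hcast, hψval]; rfl
          have hεnil : (εX t : X α β t).1 = [] := rfl
          -- case analysis on b and d + a
          have hsurv : w' = [] ∨ ∃ e : α, w' = [Sum.inl e] := by
            by_cases hb0 : b = 0
            · have hεb : (permR (α := α) t b (εX t)).1 = [] := by
                rw [hb0]
                have h1 : permR t (0 : β) = (1 : Equiv.Perm (X α β t)) := permR_zero t
                rw [h1]; rfl
              rw [hεb, hεnil, raw_nil (β := β) t (d + a)] at hw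
              by_cases he : d + a = 0
              · rw [if_pos (Or.inl he)] at hw
                left
                simpa using List.reverse_eq_nil_iff.1 (by simpa using hw)
              · rw [if_neg (by push_neg; exact ⟨he, by omega⟩)] at hw
                right
                exact ⟨d + a, by
                  have : w'.reverse = [Sum.inl (d + a)] := by simpa using hw
                  have := congrArg List.reverse this
                  simpa using this⟩
            · have hεb : (permR (α := α) t b (εX t)).1 = [Sum.inr b] := by
                apply permR_fresh t b (εX t) hb0 (by rw [hεnil]; simpa using ht) (Or.inl hεnil)
                  |>.trans (by rw [hεnil])
              rw [hεnil, List.append_nil] at hw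
              rw [hεb, raw_inr] at hw
              exfalso
              split at hw
              · -- w'.reverse = [inr b], contradicting headInl
                have hwr : w' = [Sum.inr b] := by
                  have h1 := congrArg List.reverse hw
                  simpa using h1
                rcases hhead with h0 | ⟨cc, uu, hcc⟩
                · rw [h0] at hwr; simp at hwr
                · rw [hcc] at hwr; simp at hwr
              · have hwr : w' = [Sum.inr b, Sum.inl (d + a)] := by
                  have h1 := congrArg List.reverse hw
                  simpa using h1
                rcases hhead with h0 | ⟨cc, uu, hcc⟩
                · rw [h0] at hwr; simp at hwr
                · rw [hcc] at hwr; simp at hwr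
          -- survivors force the cycle to have length 2
          have hlq : q.support.length = 2 := by
            rcases hsurv with rfl | ⟨e, rfl⟩
            · rw [hsup]; rfl
            · rw [hsup]; rfl
          rw [SimpleGraph.Walk.length_support] at hlq
          simp [SimpleGraph.Walk.length_cons] at h3
          omega

lemma no_short_cycle_A (ht : 0 < t) (u : V1 α β t)
    (c : (Gr α β t).Walk (Sum.inl u) (Sum.inl u)) (hc : c.IsCycle) :
    ¬ (c.length ≤ t) := by
  obtain ⟨x, rfl⟩ := QuotientGroup.mk_surjective u
  intro hle
  set f := (shiftIso α β t x⁻¹).toHom with hf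
  have hfix : f (Sum.inl (QuotientGroup.mk x)) = rootA α β t := by
    show Sum.inl ((x⁻¹ • (QuotientGroup.mk x : V1 α β t))) = rootA α β t
    rw [MulAction.Quotient.smul_mk, smul_eq_mul, inv_mul_cancel]
    rfl
  have hinj : Function.Injective f := (shiftIso α β t x⁻¹).toEquiv.injective
  have hc' : ((c.map f).copy hfix hfix).IsCycle := by
    rw [SimpleGraph.Walk.isCycle_copy]
    exact (SimpleGraph.Walk.map_isCycle_iff_of_injective hinj).2 hc
  refine no_short_cycle_root α β t ht _ hc' ?_
  rwa [SimpleGraph.Walk.length_copy, SimpleGraph.Walk.length_map]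

lemma no_short_cycle (ht : 0 < t) (v : V1 α β t ⊕ V2 α β t)
    (c : (Gr α β t).Walk v v) (hc : c.IsCycle) : ¬ (c.length ≤ t) := by
  haveI : DecidableEq (V1 α β t ⊕ V2 α β t) := Classical.decEq _
  rcases v with u | u
  · exact no_short_cycle_A α β t ht u c hc
  · cases c with
    | nil => exact fun _ => SimpleGraph.Walk.IsCycle.not_of_nil hc
    | @cons _ vm _ h q =>
        rcases vm with u2 | u2
        · intro hle
          have hm : (Sum.inl u2 : V1 α β t ⊕ V2 α β t) ∈
              (SimpleGraph.Walk.cons h q).support := by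
            rw [SimpleGraph.Walk.support_cons]
            exact List.mem_cons_of_mem _ q.start_mem_support
          have hrot := hc.rotate hm
          have hlen : ((SimpleGraph.Walk.cons h q).rotate _ hm).length =
              (SimpleGraph.Walk.cons h q).length := by
            have hperm := (SimpleGraph.Walk.rotate_darts (SimpleGraph.Walk.cons h q) _ hm).perm.length_eq
            simpa [SimpleGraph.Walk.length_darts] using hperm
          exact no_short_cycle_A α β t ht u2 _ hrot (by rwa [hlen])
        · exact absurd h (not_adj_inr_inr α β t _ _)

end Girth

section Conn

variable (α β : Type) [AddGroup α] [AddGroup β] [DecidableEq α] [DecidableEq β] (t : ℕ)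

lemma shift_inl (g x : ↥(Hgrp α β t)) :
    (shiftIso α β t g).toHom (.inl (mkA α β t x)) =
      (.inl (mkA α β t (g * x)) : V1 α β t ⊕ V2 α β t) := by
  show Sum.inl (g • (QuotientGroup.mk x : V1 α β t)) =
    Sum.inl (QuotientGroup.mk (g * x) : V1 α β t)
  rw [MulAction.Quotient.smul_mk, smul_eq_mul]

lemma shift_inr (g x : ↥(Hgrp α β t)) :
    (shiftIso α β t g).toHom (.inr (mkB α β t x)) =
      (.inr (mkB α β t (g * x)) : V1 α β t ⊕ V2 α β t) := by
  show Sum.inr (g • (QuotientGroup.mk x : V2 α β t)) =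
    Sum.inr (QuotientGroup.mk (g * x) : V2 α β t)
  rw [MulAction.Quotient.smul_mk, smul_eq_mul]

lemma reach_root_A (x : ↥(Hgrp α β t)) :
    (Gr α β t).Reachable (rootA α β t) (.inl (mkA α β t x)) := by
  have hx := x.2
  have main : ∀ (g : Equiv.Perm (X α β t)) (hg : g ∈ Subgroup.closure (gens α β t)),
      (Gr α β t).Reachable (rootA α β t) (.inl (mkA α β t ⟨g, hg⟩)) := by
    intro g hg
    induction hg using Subgroup.closure_induction with
    | mem y hy =>
        rcases hy with ⟨a, rfl⟩ | ⟨b, rfl⟩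
        · -- permL a : same coset as the root
          have : mkA α β t ⟨permL t a, _⟩ = mkA α β t 1 :=
            ((mkA_eq_iff α β t).2 ⟨a, by
              rw [one_mul]; rfl⟩).symm
          rw [this]
          exact SimpleGraph.Reachable.refl _
        · -- permR b : two steps
          have h1 : (Gr α β t).Adj (rootA α β t) (.inr (mkB α β t 1)) :=
            (adj_inl_inr α β t).2 (rel_self α β t 1)
          have h2 : mkB α β t 1 = mkB α β t (ψH α β t b) :=
            (mkB_eq_iff α β t).2 ⟨b, by rw [one_mul]⟩
          have h3 : (Gr α β t).Adj (.inr (mkB α β t (ψH α β t b)))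
              (.inl (mkA α β t (ψH α β t b))) :=
            (adj_inr_inl α β t).2 (rel_self α β t (ψH α β t b))
          have hψ : mkA α β t ⟨permR t b, _⟩ = mkA α β t (ψH α β t b) := rfl
          rw [hψ]
          exact (h1.reachable.trans (h2 ▸ h3.reachable))
    | one =>
        exact SimpleGraph.Reachable.refl _
    | mul y z hy hz ihy ihz =>
        have hshift := ihz.map (shiftIso α β t ⟨y, hy⟩).toHom
        rw [shift_inl] at hshift
        have hroot : (shiftIso α β t ⟨y, hy⟩).toHom (rootA α β t) =
            (.inl (mkA α β t ⟨y, hy⟩) : V1 α β t ⊕ V2 α β t) := by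
          have := shift_inl α β t ⟨y, hy⟩ 1
          rw [mul_one] at this
          exact this
        rw [hroot] at hshift
        exact ihy.trans hshift
    | inv y hy ihy =>
        have hshift := ihy.map (shiftIso α β t ⟨y, hy⟩⁻¹).toHom
        rw [shift_inl] at hshift
        have hroot : (shiftIso α β t ⟨y, hy⟩⁻¹).toHom (rootA α β t) =
            (.inl (mkA α β t ⟨y, hy⟩⁻¹) : V1 α β t ⊕ V2 α β t) := by
          have := shift_inl α β t ⟨y, hy⟩⁻¹ 1
          rw [mul_one] at this
          exact this
        rw [hroot, inv_mul_cancel] at hshift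
        exact (hshift.symm).trans (SimpleGraph.Reachable.refl _)
  exact main x.1 hx

lemma reach_root (v : V1 α β t ⊕ V2 α β t) :
    (Gr α β t).Reachable (rootA α β t) v := by
  rcases v with u | u
  · obtain ⟨x, rfl⟩ := QuotientGroup.mk_surjective u
    exact reach_root_A α β t x
  · obtain ⟨x, rfl⟩ := QuotientGroup.mk_surjective u
    refine (reach_root_A α β t x).trans ?_
    exact ((adj_inl_inr α β t).2 (rel_self α β t x)).reachable

lemma Gr_preconnected : (Gr α β t).Preconnected := fun v w =>
  (reach_root α β t v).symm.trans (reach_root α β t w)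

lemma Gr_connected : (Gr α β t).Connected :=
  (SimpleGraph.connected_iff _).2 ⟨Gr_preconnected α β t, ⟨rootA α β t⟩⟩

lemma neighborSet_inl (x : ↥(Hgrp α β t)) :
    (Gr α β t).neighborSet (.inl (mkA α β t x)) =
      Set.range (fun a : α => (.inr (mkB α β t (x * φH α β t a)) : V1 α β t ⊕ V2 α β t)) := by
  ext v
  rcases v with u | u
  · simp only [SimpleGraph.mem_neighborSet]
    constructor
    · intro h; exact absurd h (not_adj_inl_inl α β t _ _)
    · rintro ⟨a, ha⟩; simp at ha
  · simp only [SimpleGraph.mem_neighborSet, adj_inl_inr]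
    constructor
    · rintro ⟨x', a, hx', hu⟩
      obtain ⟨c, hc⟩ := (mkA_eq_iff α β t).1 hx'
      refine ⟨c + a, ?_⟩
      simp only
      rw [hu, hc, mul_assoc, φH_mul]
    · rintro ⟨a, ha⟩
      exact ⟨x, a, rfl, (Sum.inr.inj ha).symm⟩

lemma neighborSet_inr (y : ↥(Hgrp α β t)) :
    (Gr α β t).neighborSet (.inr (mkB α β t y)) =
      Set.range (fun b : β => (.inl (mkA α β t (y * ψH α β t b)) : V1 α β t ⊕ V2 α β t)) := by
  ext v
  rcases v with u | u
  · simp only [SimpleGraph.mem_neighborSet, adj_inr_inl]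
    constructor
    · rintro ⟨x, a, hu, hy⟩
      obtain ⟨b, hb⟩ := (mkB_eq_iff α β t).1 hy.symm
      -- hb : y = (x * φH a) * ψH b ... wrong direction; recompute
      refine ⟨-b, ?_⟩
      have hx : x = y * ψH α β t (-b) * φH α β t (-a) := by
        rw [hb]
        rw [mul_assoc (x * φH α β t a), ψH_mul, add_neg_cancel, ψH_zero, mul_one,
          mul_assoc, φH_mul, add_neg_cancel, φH_zero, mul_one]
      have hq : mkA α β t (y * ψH α β t (-b)) = mkA α β t x :=
        (mkA_eq_iff α β t).2 ⟨-a, hx⟩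
      exact congrArg Sum.inl (hq.trans hu.symm)
    · rintro ⟨b, hb⟩
      refine ⟨y * ψH α β t b, 0, (Sum.inl.inj hb).symm, ?_⟩
      rw [φH_zero, mul_one]
      exact ((mkB_eq_iff α β t).2 ⟨b, rfl⟩)
  · simp only [SimpleGraph.mem_neighborSet]
    constructor
    · intro h; exact absurd h (not_adj_inr_inr α β t _ _)
    · rintro ⟨b, hb⟩; simp at hb

lemma inj_nbrA (ht : 0 < t) (x : ↥(Hgrp α β t)) :
    Function.Injective
      (fun a : α => (.inr (mkB α β t (x * φH α β t a)) : V1 α β t ⊕ V2 α β t)) := by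
  intro a a' h
  simp only [Sum.inr.injEq] at h
  obtain ⟨b, hb⟩ := (mkB_eq_iff α β t).1 h
  -- hb : x * φH a' = (x * φH a) * ψH b
  have h2 : φH α β t (-a + a') = ψH α β t b := by
    have := hb
    rw [mul_assoc] at this
    have h3 : φH α β t a' = φH α β t a * ψH α β t b := mul_left_cancel this
    calc φH α β t (-a + a') = (φH α β t a)⁻¹ * φH α β t a' := by
          rw [φH_inv, φH_mul]
    _ = ψH α β t b := by rw [h3, ← mul_assoc, φH_inv, φH_mul, neg_add_cancel, φH_zero, one_mul]
  have hval : permL t (-a + a') = (permR t b : Equiv.Perm (X α β t)) :=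
    congrArg Subtype.val h2
  have := (permL_eq_permR t ht hval).1
  have : a' = a := by
    have h4 : -a + a' = 0 := this
    have := congrArg (fun z => a + z) h4
    simpa [← add_assoc] using this
  rw [this]

lemma inj_nbrB (ht : 0 < t) (y : ↥(Hgrp α β t)) :
    Function.Injective
      (fun b : β => (.inl (mkA α β t (y * ψH α β t b)) : V1 α β t ⊕ V2 α β t)) := by
  intro b b' h
  simp only [Sum.inl.injEq] at h
  obtain ⟨a, ha⟩ := (mkA_eq_iff α β t).1 h
  have h2 : ψH α β t (-b + b') = φH α β t a := by
    have := ha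
    rw [mul_assoc] at this
    have h3 : ψH α β t b' = ψH α β t b * φH α β t a := mul_left_cancel this
    calc ψH α β t (-b + b') = (ψH α β t b)⁻¹ * ψH α β t b' := by
          rw [ψH_inv, ψH_mul]
    _ = φH α β t a := by rw [h3, ← mul_assoc, ψH_inv, ψH_mul, neg_add_cancel, ψH_zero, one_mul]
  have hval : permL t a = (permR t (-b + b') : Equiv.Perm (X α β t)) :=
    (congrArg Subtype.val h2).symm
  have := (permL_eq_permR t ht hval).2
  have h5 : b' = b := by
    have h4 : -b + b' = 0 := this
    have := congrArg (fun z => b + z) h4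
    simpa [← add_assoc] using this
  rw [h5]

lemma finite_X [Finite α] [Finite β] : Finite (X α β t) := by
  haveI := Fintype.ofFinite α
  haveI := Fintype.ofFinite β
  have hinj : Function.Injective (fun (x : X α β t) => (fun i : Fin t => x.1[i.1]?)) := by
    intro x y h
    apply Subtype.ext
    apply List.ext_getElem?'
    intro n hn
    have hx : x.1.length ≤ t := x.2.2
    have hy : y.1.length ≤ t := y.2.2
    have hnt : n < t := lt_of_lt_of_le hn (max_le hx hy)
    exact congrFun h ⟨n, hnt⟩
  exact Finite.of_injective _ hinj

end Conn

end Stmt17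

open Stmt17 in
/-- For all `r, s ≥ 2` and `t ≥ 1` there is a finite connected bipartite graph in which
every vertex of the first part has degree `r`, every vertex of the second part has
degree `s`, and there is no cycle of length less than `t` (i.e. the girth is ≥ `t`). -/
theorem stmt17 (r s t : ℕ) (hr : 2 ≤ r) (hs : 2 ≤ s) (ht : 1 ≤ t) :
    ∃ (V₁ V₂ : Type) (_ : Fintype V₁) (_ : Fintype V₂)
      (_ : Nonempty V₁) (_ : Nonempty V₂)
      (G : SimpleGraph (V₁ ⊕ V₂)) (_ : DecidableRel G.Adj),
      (∀ a b : V₁, ¬ G.Adj (Sum.inl a) (Sum.inl b)) ∧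
      (∀ a b : V₂, ¬ G.Adj (Sum.inr a) (Sum.inr b)) ∧
      G.Connected ∧
      (∀ a : V₁, G.degree (Sum.inl a) = r) ∧
      (∀ b : V₂, G.degree (Sum.inr b) = s) ∧
      (t : ℕ∞) ≤ G.girth := by
  classical
  haveI : NeZero r := ⟨by omega⟩
  haveI : NeZero s := ⟨by omega⟩
  have ht0 : 0 < t := ht
  haveI hXfin : Finite (X (ZMod r) (ZMod s) t) := finite_X (ZMod r) (ZMod s) t
  haveI hHfin : Finite ↥(Hgrp (ZMod r) (ZMod s) t) := by
    haveI : Finite (Equiv.Perm (X (ZMod r) (ZMod s) t)) := inferInstance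
    infer_instance
  haveI hV1fin : Finite (V1 (ZMod r) (ZMod s) t) := Quotient.finite _
  haveI hV2fin : Finite (V2 (ZMod r) (ZMod s) t) := Quotient.finite _
  haveI iF1 : Fintype (V1 (ZMod r) (ZMod s) t) := Fintype.ofFinite _
  haveI iF2 : Fintype (V2 (ZMod r) (ZMod s) t) := Fintype.ofFinite _
  set G := Gr (ZMod r) (ZMod s) t with hG
  haveI iD : DecidableRel G.Adj := Classical.decRel _
  -- degrees
  have hdegA : ∀ u : V1 (ZMod r) (ZMod s) t, G.degree (Sum.inl u) = r := by
    intro u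
    obtain ⟨x, rfl⟩ := QuotientGroup.mk_surjective u
    rw [← SimpleGraph.card_neighborSet_eq_degree]
    calc Fintype.card (G.neighborSet (Sum.inl (mkA (ZMod r) (ZMod s) t x)))
        = Fintype.card (Set.range (fun a : ZMod r =>
            (Sum.inr (mkB (ZMod r) (ZMod s) t (x * φH (ZMod r) (ZMod s) t a)) :
              V1 (ZMod r) (ZMod s) t ⊕ V2 (ZMod r) (ZMod s) t))) :=
          Fintype.card_congr (Equiv.setCongr (neighborSet_inl (ZMod r) (ZMod s) t x))
      _ = Fintype.card (ZMod r) :=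
          Set.card_range_of_injective (inj_nbrA (ZMod r) (ZMod s) t ht0 x)
      _ = r := ZMod.card r
  have hdegB : ∀ u : V2 (ZMod r) (ZMod s) t, G.degree (Sum.inr u) = s := by
    intro u
    obtain ⟨y, rfl⟩ := QuotientGroup.mk_surjective u
    rw [← SimpleGraph.card_neighborSet_eq_degree]
    calc Fintype.card (G.neighborSet (Sum.inr (mkB (ZMod r) (ZMod s) t y)))
        = Fintype.card (Set.range (fun b : ZMod s =>
            (Sum.inl (mkA (ZMod r) (ZMod s) t (y * ψH (ZMod r) (ZMod s) t b)) :
              V1 (ZMod r) (ZMod s) t ⊕ V2 (ZMod r) (ZMod s) t))) :=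
          Fintype.card_congr (Equiv.setCongr (neighborSet_inr (ZMod r) (ZMod s) t y))
      _ = Fintype.card (ZMod s) :=
          Set.card_range_of_injective (inj_nbrB (ZMod r) (ZMod s) t ht0 y)
      _ = s := ZMod.card s
  have hconn : G.Connected := Gr_connected (ZMod r) (ZMod s) t
  -- the graph is not acyclic
  have hnac : ¬ G.IsAcyclic := by
    intro hac
    have htree : G.IsTree := ⟨hconn, hac⟩
    have hE := htree.card_edgeFinset
    have hsum := G.sum_degrees_eq_twice_card_edges
    rw [Fintype.sum_sum_type] at hsum
    have e1 : ∑ a : V1 (ZMod r) (ZMod s) t, G.degree (Sum.inl a) =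
        Fintype.card (V1 (ZMod r) (ZMod s) t) * r := by
      simp [hdegA, Finset.sum_const, Finset.card_univ, smul_eq_mul]
    have e2 : ∑ b : V2 (ZMod r) (ZMod s) t, G.degree (Sum.inr b) =
        Fintype.card (V2 (ZMod r) (ZMod s) t) * s := by
      simp [hdegB, Finset.sum_const, Finset.card_univ, smul_eq_mul]
    rw [e1, e2] at hsum
    rw [Fintype.card_sum] at hE
    have hc1 : 0 < Fintype.card (V1 (ZMod r) (ZMod s) t) :=
      Fintype.card_pos_iff.2 ⟨mkA (ZMod r) (ZMod s) t 1⟩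
    have hc2 : 0 < Fintype.card (V2 (ZMod r) (ZMod s) t) :=
      Fintype.card_pos_iff.2 ⟨mkB (ZMod r) (ZMod s) t 1⟩
    have hA : Fintype.card (V1 (ZMod r) (ZMod s) t) * 2 ≤
        Fintype.card (V1 (ZMod r) (ZMod s) t) * r := Nat.mul_le_mul_left _ hr
    have hB : Fintype.card (V2 (ZMod r) (ZMod s) t) * 2 ≤
        Fintype.card (V2 (ZMod r) (ZMod s) t) * s := Nat.mul_le_mul_left _ hs
    set A := Fintype.card (V1 (ZMod r) (ZMod s) t) * r with hA'
    set B := Fintype.card (V2 (ZMod r) (ZMod s) t) * s with hB'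
    omega
  -- girth bound
  have hegirth : (t : ℕ∞) ≤ G.egirth := by
    rw [SimpleGraph.le_egirth]
    intro a w hw
    have := no_short_cycle (ZMod r) (ZMod s) t ht0 a w hw
    exact_mod_cast Nat.cast_le.2 (by omega : t ≤ w.length)
  have hgirth : (t : ℕ∞) ≤ (G.girth : ℕ∞) := by
    have hne : G.egirth ≠ ⊤ := fun h => hnac (SimpleGraph.egirth_eq_top.1 h)
    rw [SimpleGraph.girth, ENat.coe_toNat hne]
    exact hegirth
  exact ⟨V1 (ZMod r) (ZMod s) t, V2 (ZMod r) (ZMod s) t, iF1, iF2,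
    ⟨mkA (ZMod r) (ZMod s) t 1⟩, ⟨mkB (ZMod r) (ZMod s) t 1⟩, G, iD,
    fun a b => not_adj_inl_inl (ZMod r) (ZMod s) t a b,
    fun a b => not_adj_inr_inr (ZMod r) (ZMod s) t b a,
    hconn, hdegA, hdegB, hgirth⟩
end
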